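/- arXiv:1601.05033 — 6 statements merged into one kernel-verified Lean document; each statement's English description precedes it below -/
import Mathlib

section
/- Under the standard assumptions, for every joining λ ∈ J(S:ν) and every n ≥ 1, ∫ c dλ ≥ (1/n) ∫_Y G_n(y) dν(y), where G_n(y) = inf_{x ∈ X} Σ_{i=0}^{n−1} c(Sⁱx, Tⁱy). Consequently C(S:ν) ≥ sup_n (1/n) ∫ G_n dν. -/
open MeasureTheory Finset

section AuxiliaryLemmas
open Filter Set Topology
open scoped ENNReal NNReal

namespace CostGeGnAux

lemma lsc_iInf {X Z : Type*} [TopologicalSpace X] [CompactSpace X] [Nonempty X]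
    [TopologicalSpace Z] {f : X × Z → ℝ} (hf : LowerSemicontinuous f)
    (hb : ∀ z, BddBelow (Set.range fun x => f (x, z))) :
    LowerSemicontinuous fun z => ⨅ x, f (x, z) := by
  intro z t ht
  set I := ⨅ x, f (x, z) with hI
  set s := (t + I) / 2 with hs
  have hts : t < s := by rw [hs]; linarith
  have hsI : s < I := by rw [hs]; linarith
  have hx : ∀ x : X, s < f (x, z) := fun x => lt_of_lt_of_le hsI (ciInf_le (hb z) x)
  have hnbhd : ∀ x : X, ∃ u ∈ 𝓝 x, ∃ v ∈ 𝓝 z, ∀ p ∈ u ×ˢ v, s < f p := by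
    intro x
    have := hf (x, z) s (hx x)
    rw [nhds_prod_eq] at this
    rcases Filter.mem_prod_iff.mp this with ⟨u, hu, v, hv, huv⟩
    exact ⟨u, hu, v, hv, fun p hp => huv hp⟩
  choose u hu v hv hspec using hnbhd
  obtain ⟨tf, htf⟩ := IsCompact.elim_nhds_subcover isCompact_univ u (fun x _ => hu x)
  have hV : (⋂ x ∈ tf, v x) ∈ 𝓝 z := (Filter.biInter_mem tf.finite_toSet).mpr fun x _ => hv x
  filter_upwards [hV] with z' hz'
  refine lt_of_lt_of_le hts (le_ciInf fun x' => ?_)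
  have : x' ∈ ⋃ x ∈ tf, u x := htf.2 (Set.mem_univ x')
  rcases Set.mem_iUnion₂.mp this with ⟨x, hxtf, hx'⟩
  have hz'v : z' ∈ v x := by
    have := Set.mem_iInter₂.mp hz'
    exact this x hxtf
  exact (hspec x (x', z') ⟨hx', hz'v⟩).le

lemma kb_exists_invariant {X : Type*} [MetricSpace X] [CompactSpace X] [Nonempty X]
  [MeasurableSpace X] [BorelSpace X] (S : X → X) (hS : Continuous S) :
    ∃ μ : Measure X, IsProbabilityMeasure μ ∧ μ.map S = μ := by
  classical
  obtain ⟨x₀⟩ := ‹Nonempty X›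
  set U : Ultrafilter ℕ := Ultrafilter.of atTop with hUdef
  have hU : (U : Filter ℕ) ≤ atTop := Ultrafilter.of_le _
  set ind : Set X → ℕ → ℝ := fun K i => if S^[i] x₀ ∈ K then 1 else 0 with hind
  set a : Set X → ℕ → ℝ := fun K n => (n : ℝ)⁻¹ * ∑ i ∈ range n, ind K i with ha
  have hind_nonneg : ∀ K i, 0 ≤ ind K i := by
    intro K i; simp only [hind]; split <;> norm_num
  have hind_le_one : ∀ K i, ind K i ≤ 1 := by
    intro K i; simp only [hind]; split <;> norm_num
  have hmem : ∀ K n, a K n ∈ Icc (0:ℝ) 1 := by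
    intro K n
    constructor
    · exact mul_nonneg (by positivity) (Finset.sum_nonneg fun i _ => hind_nonneg K i)
    · rcases Nat.eq_zero_or_pos n with h | h
      · simp [ha, h]
      · have h1 : ∑ i ∈ range n, ind K i ≤ (n : ℝ) := by
          calc ∑ i ∈ range n, ind K i ≤ ∑ i ∈ range n, (1:ℝ) :=
                Finset.sum_le_sum fun i _ => hind_le_one K i
            _ = n := by simp
        have hn : (0:ℝ) < n := by exact_mod_cast h
        calc (n:ℝ)⁻¹ * ∑ i ∈ range n, ind K i ≤ (n:ℝ)⁻¹ * n :=
              mul_le_mul_of_nonneg_left h1 (by positivity)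
          _ = 1 := inv_mul_cancel₀ hn.ne'
  have hexists : ∀ K : Set X, ∃ l ∈ Icc (0:ℝ) 1, Tendsto (a K) (U : Filter ℕ) (𝓝 l) := by
    intro K
    have hle : (U.map (a K) : Filter ℝ) ≤ 𝓟 (Icc (0:ℝ) 1) := by
      rw [le_principal_iff]
      exact Filter.mem_map.mpr (Filter.Eventually.mp (Filter.Eventually.of_forall (hmem K))
        (Filter.Eventually.of_forall fun n h => h))
    obtain ⟨l, hl, hle'⟩ := isCompact_Icc.ultrafilter_le_nhds (U.map (a K)) hle
    exact ⟨l, hl, hle'⟩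
  choose ℓ hℓIcc hℓtendsto using hexists
  -- monotone
  have hmono : ∀ {K K' : Set X}, K ⊆ K' → ℓ K ≤ ℓ K' := by
    intro K K' hKK'
    refine le_of_tendsto_of_tendsto' (hℓtendsto K) (hℓtendsto K') fun n => ?_
    refine mul_le_mul_of_nonneg_left (Finset.sum_le_sum fun i _ => ?_) (by positivity)
    simp only [hind]
    split
    · rename_i hmemK; simp [hKK' hmemK]
    · split <;> norm_num
  -- disjoint additivity
  have hdisj : ∀ {K K' : Set X}, Disjoint K K' → ℓ (K ∪ K') = ℓ K + ℓ K' := by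
    intro K K' hd
    refine tendsto_nhds_unique (hℓtendsto (K ∪ K')) ?_
    have heq : a (K ∪ K') = fun n => a K n + a K' n := by
      funext n
      simp only [ha, ← mul_add, ← Finset.sum_add_distrib]
      congr 1
      refine Finset.sum_congr rfl fun i _ => ?_
      simp only [hind, Set.mem_union]
      by_cases h1 : S^[i] x₀ ∈ K
      · have h2 : S^[i] x₀ ∉ K' := Set.disjoint_left.mp hd h1
        simp [h1, h2]
      · by_cases h2 : S^[i] x₀ ∈ K' <;> simp [h1, h2]
    rw [heq]
    exact (hℓtendsto K).add (hℓtendsto K')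
  -- subadditivity
  have hsub : ∀ K K' : Set X, ℓ (K ∪ K') ≤ ℓ K + ℓ K' := by
    intro K K'
    refine le_of_tendsto_of_tendsto' (hℓtendsto (K ∪ K'))
      ((hℓtendsto K).add (hℓtendsto K')) fun n => ?_
    simp only [ha, ← mul_add, ← Finset.sum_add_distrib]
    refine mul_le_mul_of_nonneg_left (Finset.sum_le_sum fun i _ => ?_) (by positivity)
    simp only [hind, Set.mem_union]
    by_cases h1 : S^[i] x₀ ∈ K <;> by_cases h2 : S^[i] x₀ ∈ K' <;> simp [h1, h2] <;> norm_num
  -- invariance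
  have hinv : ∀ K : Set X, ℓ (S ⁻¹' K) = ℓ K := by
    intro K
    have key : ∀ n, a (S ⁻¹' K) n = a K n + (n:ℝ)⁻¹ * (ind K n - ind K 0) := by
      intro n
      have h1 : ∀ i, ind (S ⁻¹' K) i = ind K (i + 1) := by
        intro i
        simp only [hind, Set.mem_preimage, Function.iterate_succ_apply']
      have h2 : ∑ i ∈ range n, ind K (i+1) = ∑ i ∈ range n, ind K i + (ind K n - ind K 0) := by
        have := Finset.sum_range_succ' (ind K) n
        have h3 := Finset.sum_range_succ (ind K) n
        -- sum_range_succ' : ∑ i in range (n+1), f i = (∑ i in range n, f (i+1)) + f 0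
        linarith [this, h3]
      simp only [ha, h1, h2, mul_add]
    have hz : Tendsto (fun n : ℕ => (n:ℝ)⁻¹ * (ind K n - ind K 0)) atTop (𝓝 0) := by
      have : Tendsto (fun n : ℕ => (n:ℝ)⁻¹) atTop (𝓝 0) := tendsto_inv_atTop_zero.comp
        tendsto_natCast_atTop_atTop
      have hb : ∀ n : ℕ, |(n:ℝ)⁻¹ * (ind K n - ind K 0)| ≤ (n:ℝ)⁻¹ := by
        intro n
        rw [abs_mul, abs_of_nonneg (by positivity : (0:ℝ) ≤ (n:ℝ)⁻¹)]
        have : |ind K n - ind K 0| ≤ 1 := by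
          rw [abs_le]
          constructor <;> nlinarith [hind_nonneg K n, hind_le_one K n, hind_nonneg K 0,
            hind_le_one K 0]
        calc (n:ℝ)⁻¹ * |ind K n - ind K 0| ≤ (n:ℝ)⁻¹ * 1 :=
              mul_le_mul_of_nonneg_left this (by positivity)
          _ = (n:ℝ)⁻¹ := mul_one _
      exact squeeze_zero_norm hb this
    refine tendsto_nhds_unique (hℓtendsto (S ⁻¹' K)) ?_
    have : Tendsto (fun n => a K n + (n:ℝ)⁻¹ * (ind K n - ind K 0)) (U : Filter ℕ)
        (𝓝 (ℓ K + 0)) := (hℓtendsto K).add (hz.mono_left hU)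
    rw [add_zero] at this
    exact (funext key : a (S ⁻¹' K) = _) ▸ this
  have huniv : ℓ Set.univ = 1 := by
    refine tendsto_nhds_unique (hℓtendsto Set.univ) ?_
    have hev : ∀ᶠ n in atTop, a Set.univ n = 1 := by
      filter_upwards [eventually_ge_atTop 1] with n hn
      have hn' : (0:ℝ) < n := by exact_mod_cast hn
      simp only [ha, hind, Set.mem_univ, if_true, Finset.sum_const, Finset.card_range,
        nsmul_eq_mul, mul_one]
      exact inv_mul_cancel₀ hn'.ne'
    exact Tendsto.congr' ((hev.filter_mono hU).mono fun n h => h.symm) tendsto_const_nhds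
  have hℓ0 : ∀ K : Set X, 0 ≤ ℓ K := fun K => (hℓIcc K).1
  -- the content
  set C : Content X :=
    { toFun := fun K => Real.toNNReal (ℓ (K : Set X))
      mono' := fun K₁ K₂ h => Real.toNNReal_mono (hmono h)
      sup_disjoint' := by
        intro K₁ K₂ hd _ _
        simp only [TopologicalSpace.Compacts.coe_sup]
        rw [hdisj hd, Real.toNNReal_add (hℓ0 _) (hℓ0 _)]
      sup_le' := by
        intro K₁ K₂
        simp only [TopologicalSpace.Compacts.coe_sup]
        calc Real.toNNReal (ℓ (↑K₁ ∪ ↑K₂)) ≤ Real.toNNReal (ℓ ↑K₁ + ℓ ↑K₂) :=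
              Real.toNNReal_mono (hsub _ _)
          _ = _ := Real.toNNReal_add (hℓ0 _) (hℓ0 _) } with hC
  set μ : Measure X := C.measure with hμ
  -- total mass one
  have hμuniv : μ Set.univ = 1 := by
    rw [hμ, C.measure_apply MeasurableSet.univ,
      C.outerMeasure_of_isOpen Set.univ isOpen_univ]
    have := C.innerContent_of_isCompact (K := Set.univ) isCompact_univ isOpen_univ
    rw [this]
    show ((Real.toNNReal (ℓ Set.univ) : ℝ≥0) : ℝ≥0∞) = 1
    rw [huniv]
    simp
  have hprob : IsProbabilityMeasure μ := ⟨hμuniv⟩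
  -- invariance on open sets
  have hopen : ∀ V : Set X, IsOpen V → C.outerMeasure (S ⁻¹' V) = C.outerMeasure V := by
    intro V hV
    rw [C.outerMeasure_of_isOpen _ (hV.preimage hS), C.outerMeasure_of_isOpen _ hV]
    apply le_antisymm
    · refine iSup₂_le fun K hK => ?_
      have hSK : IsCompact (S '' (K : Set X)) := K.2.image hS
      have hsub' : S '' (K : Set X) ⊆ V := Set.image_subset_iff.mpr hK
      have h1 : (C K : ℝ≥0∞) ≤ C ⟨S '' (K : Set X), hSK⟩ := by
        apply ENNReal.coe_le_coe.2
        apply Real.toNNReal_mono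
        calc ℓ (K : Set X) ≤ ℓ (S ⁻¹' (S '' (K : Set X))) :=
              hmono (Set.subset_preimage_image S _)
          _ = ℓ (S '' (K : Set X)) := hinv _
      exact h1.trans (C.le_innerContent _ _ hsub')
    · refine iSup₂_le fun K hK => ?_
      have hSK : IsCompact (S ⁻¹' (K : Set X)) :=
        (IsClosed.preimage hS K.2.isClosed).isCompact
      have h1 : (C K : ℝ≥0∞) = C ⟨S ⁻¹' (K : Set X), hSK⟩ := by
        show ((Real.toNNReal (ℓ (K : Set X)) : ℝ≥0) : ℝ≥0∞)
          = ((Real.toNNReal (ℓ (S ⁻¹' (K : Set X))) : ℝ≥0) : ℝ≥0∞)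
        rw [hinv]
      have h2 : S ⁻¹' (K : Set X) ⊆ S ⁻¹' V := Set.preimage_mono hK
      exact h1.le.trans (C.le_innerContent ⟨S ⁻¹' (K : Set X), hSK⟩ ⟨S ⁻¹' V, hV.preimage hS⟩ h2)
  -- invariance of the measure
  have hmap : μ.map S = μ := by
    haveI := hprob
    haveI : IsProbabilityMeasure (μ.map S) :=
      Measure.isProbabilityMeasure_map hS.measurable.aemeasurable
    refine MeasureTheory.ext_of_generate_finite {s : Set X | IsOpen s} ?_
      isPiSystem_isOpen ?_ ?_
    · borelize X
      exact BorelSpace.measurable_eq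
    · intro s hs
      rw [Measure.map_apply hS.measurable hs.measurableSet, hμ,
        C.measure_apply (hs.measurableSet.preimage hS.measurable),
        C.measure_apply hs.measurableSet]
      exact hopen s hs
    · rw [measure_univ, measure_univ]
  exact ⟨μ, hprob, hmap⟩

end CostGeGnAux

end AuxiliaryLemmas

section MainTheorem
open Filter Set Topology
open scoped ENNReal NNReal

/-- For every joining `λ ∈ J(S:ν)` and `n ≥ 1`,
`∫ c dλ ≥ (1/n) ∫ G_n dν`; consequently
`C(S:ν) ≥ sup_n (1/n) ∫ G_n dν`. -/
theorem cost_ge_Gn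
    {X Y : Type*}
    [MetricSpace X] [CompactSpace X] [Nonempty X]
    [MeasurableSpace X] [BorelSpace X]
    [TopologicalSpace Y] [PolishSpace Y] [MeasurableSpace Y] [BorelSpace Y]
    (S : X → X) (hS : Continuous S)
    (T : Y → Y) (hT : Measurable T)
    (ν : Measure Y) [IsProbabilityMeasure ν] (hν : Ergodic T ν)
    (c : X × Y → ℝ) (hc : LowerSemicontinuous c)
    (cstar : Y → ℝ) (hcstar : Integrable cstar ν)
    (hbound : ∀ x y, |c (x, y)| ≤ cstar y)
    (G : ℕ → Y → ℝ)
    (hG : ∀ n y, G n y = ⨅ x : X, ∑ i ∈ Finset.range n, c (S^[i] x, T^[i] y)) :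
    (∀ lam : Measure (X × Y), IsProbabilityMeasure lam →
        lam.map (Prod.map S T) = lam → lam.map Prod.snd = ν →
        ∀ n : ℕ, 1 ≤ n →
          ∫ p, c p ∂lam ≥ (1 / (n : ℝ)) * ∫ y, G n y ∂ν) ∧
    (∀ n : ℕ, 1 ≤ n →
      sInf {r : ℝ | ∃ lam : Measure (X × Y), IsProbabilityMeasure lam ∧
          lam.map (Prod.map S T) = lam ∧ lam.map Prod.snd = ν ∧
          ∫ p, c p ∂lam = r}
        ≥ (1 / (n : ℝ)) * ∫ y, G n y ∂ν) := by
  have hc_meas : Measurable c := hc.measurable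
  have hcstar0 : ∀ y, 0 ≤ cstar y := fun y => (abs_nonneg _).trans (hbound (Classical.arbitrary X) y)
  -- measurability of G n
  have hGmeas : ∀ n, Measurable (G n) := by
    intro n
    have hFlsc : LowerSemicontinuous fun q : X × (ℕ → Y) =>
        ∑ i ∈ Finset.range n, c (S^[i] q.1, q.2 i) := by
      refine lowerSemicontinuous_sum fun i _ => ?_
      exact LowerSemicontinuous.comp hc (((hS.iterate i).comp continuous_fst).prodMk
        ((continuous_apply i).comp continuous_snd))
    have hbb : ∀ w : ℕ → Y, BddBelow (Set.range fun x =>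
        ∑ i ∈ Finset.range n, c (S^[i] x, w i)) := by
      intro w
      refine ⟨∑ i ∈ Finset.range n, -cstar (w i), ?_⟩
      rintro r ⟨x, rfl⟩
      exact Finset.sum_le_sum fun i _ => neg_le_of_abs_le (hbound _ _)
    have hgI : Measurable fun w : ℕ → Y => ⨅ x : X,
        ∑ i ∈ Finset.range n, c (S^[i] x, w i) :=
      (CostGeGnAux.lsc_iInf hFlsc hbb).measurable
    have hm : Measurable fun y : Y => (fun i : ℕ => T^[i] y) :=
      measurable_pi_lambda _ fun i => hT.iterate i
    have : G n = (fun w : ℕ → Y => ⨅ x : X, ∑ i ∈ Finset.range n, c (S^[i] x, w i)) ∘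
        (fun y i => T^[i] y) := by
      funext y; rw [hG n y]; rfl
    rw [this]
    exact hgI.comp hm
  -- integrable majorant for G n
  have hHint : ∀ n, Integrable (fun y => ∑ i ∈ Finset.range n, cstar (T^[i] y)) ν := by
    intro n
    refine integrable_finset_sum _ fun i _ => ?_
    exact ((hν.toMeasurePreserving.iterate i).integrable_comp
      hcstar.aestronglyMeasurable).mpr hcstar
  have hGbound : ∀ n y, |G n y| ≤ ∑ i ∈ Finset.range n, cstar (T^[i] y) := by
    intro n y
    rw [hG n y, abs_le]
    have hbb : BddBelow (Set.range fun x =>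
        ∑ i ∈ Finset.range n, c (S^[i] x, T^[i] y)) := by
      refine ⟨∑ i ∈ Finset.range n, -cstar (T^[i] y), ?_⟩
      rintro r ⟨x, rfl⟩
      exact Finset.sum_le_sum fun i _ => neg_le_of_abs_le (hbound _ _)
    constructor
    · rw [← Finset.sum_neg_distrib]
      refine le_ciInf fun x => Finset.sum_le_sum fun i _ => neg_le_of_abs_le (hbound _ _)
    · refine (ciInf_le hbb (Classical.arbitrary X)).trans ?_
      exact Finset.sum_le_sum fun i _ => (le_abs_self _).trans (hbound _ _)
  have hGint : ∀ n, Integrable (G n) ν := by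
    intro n
    refine (hHint n).mono' (hGmeas n).aestronglyMeasurable ?_
    exact Filter.Eventually.of_forall fun y => by
      simpa [Real.norm_eq_abs] using hGbound n y
  -- Part 1
  have part1 : ∀ lam : Measure (X × Y), IsProbabilityMeasure lam →
      lam.map (Prod.map S T) = lam → lam.map Prod.snd = ν →
      ∀ n : ℕ, 1 ≤ n →
        ∫ p, c p ∂lam ≥ (1 / (n : ℝ)) * ∫ y, G n y ∂ν := by
    intro lam hprob hinv hsnd n hn
    haveI := hprob
    have hφ : Measurable (Prod.map S T) := hS.measurable.prodMap hT
    have hmp : MeasurePreserving (Prod.map S T) lam lam := ⟨hφ, hinv⟩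
    have hsndmp : MeasurePreserving Prod.snd lam ν := ⟨measurable_snd, hsnd⟩
    have hInt_c : Integrable c lam := by
      refine Integrable.mono ((hsndmp.integrable_comp hcstar.aestronglyMeasurable).mpr hcstar)
        hc_meas.aestronglyMeasurable ?_
      refine Filter.Eventually.of_forall fun p => ?_
      simp only [Real.norm_eq_abs, Function.comp_apply]
      exact (hbound p.1 p.2).trans (le_abs_self _)
    have hIntIter : ∀ i : ℕ, Integrable (fun p => c ((Prod.map S T)^[i] p)) lam := fun i =>
      (((hmp.iterate i).integrable_comp hc_meas.aestronglyMeasurable).mpr hInt_c)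
    have hIter : ∀ i : ℕ, ∫ p, c ((Prod.map S T)^[i] p) ∂lam = ∫ p, c p ∂lam := by
      intro i
      have hmpi := hmp.iterate i
      rw [← MeasureTheory.integral_map hmpi.measurable.aemeasurable
        hc_meas.aestronglyMeasurable, hmpi.map_eq]
    have hsum : ∫ p, (∑ i ∈ Finset.range n, c ((Prod.map S T)^[i] p)) ∂lam
        = (n : ℝ) * ∫ p, c p ∂lam := by
      rw [integral_finset_sum _ fun i _ => hIntIter i]
      simp only [hIter]
      rw [Finset.sum_const, Finset.card_range, nsmul_eq_mul]
    have hpt : ∀ p : X × Y, G n p.2 ≤ ∑ i ∈ Finset.range n, c ((Prod.map S T)^[i] p) := by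
      intro p
      have heq : ∀ i, (Prod.map S T)^[i] p = (S^[i] p.1, T^[i] p.2) := by
        intro i; rw [Prod.map_iterate]; rfl
      simp only [heq]
      rw [hG n p.2]
      have hbb : BddBelow (Set.range fun x =>
          ∑ i ∈ Finset.range n, c (S^[i] x, T^[i] p.2)) := by
        refine ⟨∑ i ∈ Finset.range n, -cstar (T^[i] p.2), ?_⟩
        rintro r ⟨x, rfl⟩
        exact Finset.sum_le_sum fun i _ => neg_le_of_abs_le (hbound _ _)
      exact ciInf_le hbb p.1
    have hIntG2 : Integrable (fun p : X × Y => G n p.2) lam :=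
      (hsndmp.integrable_comp (hGmeas n).aestronglyMeasurable).mpr (hGint n)
    have hmono : ∫ p, G n p.2 ∂lam ≤ ∫ p, (∑ i ∈ Finset.range n, c ((Prod.map S T)^[i] p)) ∂lam :=
      integral_mono hIntG2 (integrable_finset_sum _ fun i _ => hIntIter i) hpt
    have hmarg : ∫ p, G n p.2 ∂lam = ∫ y, G n y ∂ν := by
      rw [← hsnd, MeasureTheory.integral_map measurable_snd.aemeasurable]
      rw [hsnd]
      exact (hGmeas n).aestronglyMeasurable
    have hn' : (0 : ℝ) < n := by exact_mod_cast hn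
    rw [ge_iff_le]
    have key : ∫ y, G n y ∂ν ≤ (n : ℝ) * ∫ p, c p ∂lam := by
      rw [← hmarg, ← hsum]; exact hmono
    calc (1 / (n : ℝ)) * ∫ y, G n y ∂ν ≤ (1 / (n : ℝ)) * ((n : ℝ) * ∫ p, c p ∂lam) := by
          apply mul_le_mul_of_nonneg_left key (by positivity)
      _ = ∫ p, c p ∂lam := by field_simp
    -- done part 1
  refine ⟨part1, ?_⟩
  intro n hn
  obtain ⟨μ, hμprob, hμmap⟩ := CostGeGnAux.kb_exists_invariant S hS
  haveI := hμprob
  have hlam0 : IsProbabilityMeasure (μ.prod ν) := inferInstance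
  have hmap0 : (μ.prod ν).map (Prod.map S T) = μ.prod ν := by
    rw [← Measure.map_prod_map _ _ hS.measurable hT, hμmap, hν.toMeasurePreserving.map_eq]
  have hsnd0 : (μ.prod ν).map Prod.snd = ν := by
    rw [Measure.map_snd_prod, measure_univ, one_smul]
  refine le_csInf ⟨∫ p, c p ∂(μ.prod ν), ⟨μ.prod ν, hlam0, hmap0, hsnd0, rfl⟩⟩ ?_
  rintro r ⟨lam, h1, h2, h3, rfl⟩
  exact part1 lam h1 h2 h3 n hn

end MainTheorem
end

section
/- Under the standard assumptions, a joining λ ∈ J_min(S:ν) is an extreme point of the convex set J_min(S:ν) if and only if λ is ergodic with respect to S × T. -/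
open MeasureTheory Measure Set
open scoped ENNReal NNReal

section Aux

/-- restrict to an invariant set is invariant -/
lemma aux_restrict_invariant {α : Type*} [MeasurableSpace α] {f : α → α}
    (hf : Measurable f) {μ : Measure α} (hμ : μ.map f = μ)
    {s : Set α} (hs : MeasurableSet s) (hinv : f ⁻¹' s = s) :
    (μ.restrict s).map f = μ.restrict s := by
  ext E hE
  rw [Measure.map_apply hf hE, Measure.restrict_apply hE, Measure.restrict_apply (hf hE)]
  conv_lhs => rw [← hinv, ← Set.preimage_inter, ← Measure.map_apply hf (hE.inter hs), hμ]

/-- snd-marginal of an S×T invariant measure is T-invariant -/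
lemma aux_snd_invariant {X Y : Type*} [MeasurableSpace X] [MeasurableSpace Y]
    {S : X → X} {T : Y → Y} (hS : Measurable S) (hT : Measurable T)
    {m : Measure (X × Y)} (hm : m.map (Prod.map S T) = m) :
    (m.map Prod.snd).map T = m.map Prod.snd := by
  rw [Measure.map_map hT measurable_snd,
    show T ∘ Prod.snd = Prod.snd ∘ Prod.map S T from rfl,
    ← Measure.map_map measurable_snd (hS.prodMap hT), hm]

/-- integrability of the cost and the lower bound for its integral -/
lemma aux_integrable {X Y : Type*} [MeasurableSpace X] [MeasurableSpace Y]
    {c : X × Y → ℝ} (hcm : Measurable c) {cstar : Y → ℝ} {ν : Measure Y}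
    (hcstar : Integrable cstar ν)
    (hbound : ∀ x y, |c (x, y)| ≤ cstar y)
    (m : Measure (X × Y)) (hm : m.map Prod.snd = ν) :
    Integrable c m ∧ -∫ y, cstar y ∂ν ≤ ∫ p, c p ∂m := by
  have hsm : AEStronglyMeasurable cstar (m.map Prod.snd) := by
    rw [hm]; exact hcstar.aestronglyMeasurable
  have hg : Integrable (fun p : X × Y => cstar p.2) m := by
    have := (integrable_map_measure hsm measurable_snd.aemeasurable).mp (by rwa [hm])
    exact this
  have hci : Integrable c m := by
    refine hg.mono hcm.aestronglyMeasurable (Filter.Eventually.of_forall fun p => ?_)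
    exact (hbound p.1 p.2).trans (le_abs_self _)
  refine ⟨hci, ?_⟩
  have hmono : ∫ p, (fun p : X × Y => -cstar p.2) p ∂m ≤ ∫ p, c p ∂m := by
    refine integral_mono hg.neg hci fun p => ?_
    simpa using neg_le_of_abs_le (hbound p.1 p.2)
  have hmap : ∫ p : X × Y, cstar p.2 ∂m = ∫ y, cstar y ∂ν := by
    rw [← hm, integral_map measurable_snd.aemeasurable hsm]
  calc -∫ y, cstar y ∂ν = ∫ p : X × Y, -cstar p.2 ∂m := by rw [← hmap, integral_neg]
    _ ≤ ∫ p, c p ∂m := hmono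

end Aux

lemma aux_invariant_ac_eq
    {α : Type*} [MeasurableSpace α] {f : α → α}
    {μ ρ : Measure α} [IsProbabilityMeasure μ] [IsProbabilityMeasure ρ]
    (hμ : Ergodic f μ) (hρ : ρ.map f = ρ) (hac : ρ ≪ μ) : ρ = μ := by
  have hfm : Measurable f := hμ.toMeasurePreserving.measurable
  have hρmp : MeasurePreserving f ρ ρ := ⟨hfm, hρ⟩
  set h : α → ℝ≥0∞ := ρ.rnDeriv μ with hh_def
  have hh : Measurable h := measurable_rnDeriv ρ μ
  have hwd : μ.withDensity h = ρ := withDensity_rnDeriv_eq ρ μ hac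
  have happ : ∀ E : Set α, MeasurableSet E → ρ E = ∫⁻ x in E, h x ∂μ := by
    intro E hE
    rw [← hwd, withDensity_apply _ hE]
  -- step 1 : each sublevel set has measure 0 or 1
  have hinv : ∀ c : ℝ≥0∞, c ≠ ⊤ → μ {x | h x < c} = 0 ∨ μ {x | h x < c} = 1 := by
    intro c hc
    rcases eq_or_ne c 0 with rfl | hc0
    · left; simp
    set B : Set α := {x | h x < c} with hB_def
    have hB : MeasurableSet B := measurableSet_lt hh measurable_const
    set A₁ : Set α := f ⁻¹' B \ B with hA₁_def
    set A₂ : Set α := B \ f ⁻¹' B with hA₂_def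
    have hA₁m : MeasurableSet A₁ := (hfm hB).diff hB
    have hA₂m : MeasurableSet A₂ := hB.diff (hfm hB)
    have key : ∀ (m : Measure α), IsProbabilityMeasure m → m (f ⁻¹' B) = m B →
        m A₁ = m A₂ := by
      intro m hm hpre
      have h1 : m A₁ = m (f ⁻¹' B) - m (f ⁻¹' B ∩ B) := by
        rw [hA₁_def, ← diff_self_inter,
          measure_diff inter_subset_left ((hfm hB).inter hB).nullMeasurableSet
            (measure_ne_top m _)]
      have h2 : m A₂ = m B - m (f ⁻¹' B ∩ B) := by
        have he : B \ f ⁻¹' B = B \ (f ⁻¹' B ∩ B) := by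
          rw [inter_comm, diff_self_inter]
        rw [hA₂_def, he,
          measure_diff inter_subset_right ((hfm hB).inter hB).nullMeasurableSet
            (measure_ne_top m _)]
      rw [h1, h2, hpre]
    have hμ12 : μ A₁ = μ A₂ :=
      key μ inferInstance (hμ.toMeasurePreserving.measure_preimage hB.nullMeasurableSet)
    have hρ12 : ρ A₁ = ρ A₂ :=
      key ρ inferInstance (hρmp.measure_preimage hB.nullMeasurableSet)
    -- ρ A₂ ≤ c * μ A₂
    have hup : ρ A₂ ≤ c * μ A₂ := by
      rw [happ A₂ hA₂m]
      calc ∫⁻ x in A₂, h x ∂μ ≤ ∫⁻ _x in A₂, c ∂μ := by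
            refine setLIntegral_mono measurable_const ?_
            intro x hx
            exact le_of_lt hx.1
        _ = c * μ A₂ := by rw [setLIntegral_const]
    -- c * μ A₁ ≤ ρ A₁
    have hlo : c * μ A₁ ≤ ρ A₁ := by
      rw [happ A₁ hA₁m]
      calc c * μ A₁ = ∫⁻ _x in A₁, c ∂μ := by rw [setLIntegral_const]
        _ ≤ ∫⁻ x in A₁, h x ∂μ := by
            refine setLIntegral_mono hh ?_
            intro x hx
            exact not_lt.mp hx.2
    have heq : ∫⁻ x in A₂, h x ∂μ = c * μ A₂ := by
      refine le_antisymm (by rw [← happ A₂ hA₂m]; exact hup) ?_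
      rw [← happ A₂ hA₂m, ← hρ12, ← hμ12]
      exact hlo
    -- conclude μ A₂ = 0
    have hA₂0 : μ A₂ = 0 := by
      have hfin : ∫⁻ x in A₂, h x ∂μ ≠ ⊤ := by
        rw [heq]
        exact ENNReal.mul_ne_top hc (measure_ne_top μ _)
      have hle : ∀ᵐ x ∂(μ.restrict A₂), h x ≤ c := by
        refine (ae_restrict_iff' hA₂m).2 (Filter.Eventually.of_forall ?_)
        intro x hx
        exact le_of_lt hx.1
      have hsub : ∫⁻ x in A₂, (c - h x) ∂μ = 0 := by
        rw [lintegral_sub hh hfin hle, setLIntegral_const, heq, tsub_self]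
      have hzero : (fun x => c - h x) =ᵐ[μ.restrict A₂] 0 :=
        (lintegral_eq_zero_iff (measurable_const.sub hh)).mp hsub
      have hpos : ∀ᵐ x ∂(μ.restrict A₂), x ∈ A₂ → c - h x ≠ 0 := by
        refine Filter.Eventually.of_forall ?_
        intro x hx
        rw [Ne, tsub_eq_zero_iff_le]
        exact not_le.mpr hx.1
      have hmem : ∀ᵐ x ∂(μ.restrict A₂), x ∈ A₂ := ae_restrict_mem hA₂m
      have : ∀ᵐ x ∂(μ.restrict A₂), False := by
        filter_upwards [hzero, hpos, hmem] with x h0 h1 h2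
        exact h1 h2 h0
      have h0 : μ.restrict A₂ univ = 0 := by
        simpa [ae_iff] using this
      rw [Measure.restrict_apply_univ] at h0
      exact h0
    have hBdiff : μ (f ⁻¹' B \ B) = 0 ∧ μ (B \ f ⁻¹' B) = 0 := ⟨hμ12 ▸ hA₂0, hA₂0⟩
    have haeeq : f ⁻¹' B =ᵐ[μ] B := by
      rw [ae_eq_set]
      exact hBdiff
    rcases hμ.quasiErgodic.ae_empty_or_univ₀ hB.nullMeasurableSet haeeq with he | hu
    · left; exact (ae_eq_empty.mp he)
    · right
      have := measure_congr hu
      simpa using this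
  -- step 2 : total integral of h is 1
  have htot : ∫⁻ x, h x ∂μ = 1 := by
    have := happ univ MeasurableSet.univ
    rw [setLIntegral_univ] at this
    rw [← this, measure_univ]
  -- step 3 : {h < 1} is null
  have hlt1 : μ {x | h x < 1} = 0 := by
    rcases hinv 1 ENNReal.one_ne_top with h0 | h1
    · exact h0
    exfalso
    by_cases hall : ∀ q : ℚ, ((Real.toNNReal q : ℝ≥0) : ℝ≥0∞) < 1 → μ {x | h x < ((Real.toNNReal q : ℝ≥0) : ℝ≥0∞)} = 0
    · have hsub : {x | h x < 1} ⊆ ⋃ q : {q : ℚ // ((Real.toNNReal q : ℝ≥0) : ℝ≥0∞) < 1}, {x | h x < ((Real.toNNReal (q : ℚ) : ℝ≥0) : ℝ≥0∞)} := by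
        intro x hx
        obtain ⟨q, _, hq1, hq2⟩ := (ENNReal.lt_iff_exists_rat_btwn).mp hx
        exact mem_iUnion.2 ⟨⟨q, hq2⟩, hq1⟩
      have : μ {x | h x < 1} = 0 := by
        refine measure_mono_null hsub (measure_iUnion_null fun q => hall q q.2)
      rw [h1] at this
      exact one_ne_zero this
    · push_neg at hall
      obtain ⟨q, hq1, hq0⟩ := hall
      have hq0' : μ {x | h x < ((Real.toNNReal q : ℝ≥0) : ℝ≥0∞)} = 1 := by
        rcases hinv ((Real.toNNReal q : ℝ≥0) : ℝ≥0∞) (by simp) with h' | h'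
        · exact absurd h' hq0
        · exact h'
      set Bq := {x | h x < ((Real.toNNReal q : ℝ≥0) : ℝ≥0∞)} with hBq
      have hBqm : MeasurableSet Bq := measurableSet_lt hh measurable_const
      have hcompl : μ Bqᶜ = 0 := by
        rw [measure_compl hBqm (measure_ne_top μ _), hq0', measure_univ, tsub_self]
      have : ∫⁻ x, h x ∂μ ≤ ((Real.toNNReal q : ℝ≥0) : ℝ≥0∞) := by
        calc ∫⁻ x, h x ∂μ = ∫⁻ x in Bq, h x ∂μ + ∫⁻ x in Bqᶜ, h x ∂μ := by
              rw [lintegral_add_compl _ hBqm]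
          _ = ∫⁻ x in Bq, h x ∂μ := by
              rw [setLIntegral_measure_zero _ _ hcompl, add_zero]
          _ ≤ ∫⁻ _x in Bq, ((Real.toNNReal q : ℝ≥0) : ℝ≥0∞) ∂μ := by
              refine setLIntegral_mono measurable_const fun x hx => le_of_lt hx
          _ = ((Real.toNNReal q : ℝ≥0) : ℝ≥0∞) * μ Bq := setLIntegral_const _ _
          _ ≤ ((Real.toNNReal q : ℝ≥0) : ℝ≥0∞) := by rw [hq0', mul_one]
      rw [htot] at this
      exact absurd (lt_of_le_of_lt this hq1) (lt_irrefl _)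
  -- step 4 : h = 1 a.e.
  have hge : ∀ᵐ x ∂μ, 1 ≤ h x := by
    rw [ae_iff]
    simpa using hlt1
  have hone : h =ᵐ[μ] 1 := by
    have hfin : ∫⁻ _x : α, (1 : ℝ≥0∞) ∂μ ≠ ⊤ := by simp
    have hsub : ∫⁻ x, (h x - 1) ∂μ = 0 := by
      rw [lintegral_sub measurable_const hfin hge, htot, lintegral_one, measure_univ, tsub_self]
    have hzero : (fun x => h x - 1) =ᵐ[μ] 0 :=
      (lintegral_eq_zero_iff (hh.sub measurable_const)).mp hsub
    filter_upwards [hzero, hge] with x h0 h1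
    have : h x ≤ 1 := tsub_eq_zero_iff_le.mp h0
    exact le_antisymm this h1
  rw [← hwd, withDensity_congr_ae hone, withDensity_one]

/-- An optimal joining `λ ∈ J_min(S:ν)` is an extreme point of the convex set
`J_min(S:ν)` if and only if it is ergodic for `S × T`. -/
theorem Jmin_extreme_iff_ergodic
    {X Y : Type*}
    [MetricSpace X] [CompactSpace X] [Nonempty X]
    [MeasurableSpace X] [BorelSpace X]
    [TopologicalSpace Y] [PolishSpace Y] [MeasurableSpace Y] [BorelSpace Y]
    (S : X → X) (hS : Continuous S)
    (T : Y → Y) (hT : Measurable T)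
    (ν : Measure Y) [IsProbabilityMeasure ν] (hν : Ergodic T ν)
    (c : X × Y → ℝ) (hc : LowerSemicontinuous c)
    (cstar : Y → ℝ) (hcstar : Integrable cstar ν)
    (hbound : ∀ x y, |c (x, y)| ≤ cstar y)
    (C : ℝ)
    (hC : C = sInf {r : ℝ | ∃ lam : Measure (X × Y), IsProbabilityMeasure lam ∧
        lam.map (Prod.map S T) = lam ∧ lam.map Prod.snd = ν ∧
        ∫ p, c p ∂lam = r})
    (Jmin : Set (Measure (X × Y)))
    (hJmin : Jmin = {lam : Measure (X × Y) | IsProbabilityMeasure lam ∧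
        lam.map (Prod.map S T) = lam ∧ lam.map Prod.snd = ν ∧
        ∫ p, c p ∂lam = C})
    (lam : Measure (X × Y)) (hlam : lam ∈ Jmin) :
    (∀ lam₁ ∈ Jmin, ∀ lam₂ ∈ Jmin, ∀ t : ℝ≥0∞, 0 < t → t < 1 →
        lam = t • lam₁ + (1 - t) • lam₂ → lam₁ = lam ∧ lam₂ = lam) ↔
      Ergodic (Prod.map S T) lam := by
  have hSTm : Measurable (Prod.map S T) := hS.measurable.prodMap hT
  have hcm : Measurable c := hc.measurable
  rw [hJmin] at hlam
  obtain ⟨hlamP, hlamInv, hlamSnd, hlamC⟩ := hlam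
  haveI := hlamP
  -- the sInf set is bounded below
  have hbdd : BddBelow {r : ℝ | ∃ lam : Measure (X × Y), IsProbabilityMeasure lam ∧
      lam.map (Prod.map S T) = lam ∧ lam.map Prod.snd = ν ∧ ∫ p, c p ∂lam = r} := by
    refine ⟨-∫ y, cstar y ∂ν, ?_⟩
    rintro r ⟨m, hmP, _, hmSnd, rfl⟩
    exact (aux_integrable hcm hcstar hbound m hmSnd).2
  constructor
  · -- extreme → ergodic
    intro hext
    refine ⟨⟨hSTm, hlamInv⟩, ⟨fun s hs hsinv => ?_⟩⟩
    rw [Filter.eventuallyConst_set']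
    by_cases h0 : lam s = 0
    · left; exact ae_eq_empty.mpr h0
    by_cases h1' : lam s = 1
    · right
      rw [ae_eq_univ]
      rw [measure_compl hs (measure_ne_top lam s), h1', measure_univ, tsub_self]
    exfalso
    set t := lam s with ht_def
    have ht0 : 0 < t := pos_iff_ne_zero.mpr h0
    have htne : t ≠ ⊤ := measure_ne_top lam s
    have htle : t ≤ 1 := prob_le_one
    have ht1 : t < 1 := lt_of_le_of_ne htle h1'
    have hsc : MeasurableSet sᶜ := hs.compl
    have hscinv : Prod.map S T ⁻¹' sᶜ = sᶜ := by rw [Set.preimage_compl, hsinv]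
    have hcsc : lam sᶜ = 1 - t := by
      rw [measure_compl hs (measure_ne_top lam s), measure_univ]
    have hcs0 : lam sᶜ ≠ 0 := by
      rw [hcsc]
      exact (tsub_pos_iff_lt.mpr ht1).ne'
    have hcsne : lam sᶜ ≠ ⊤ := measure_ne_top lam _
    set lam₁ : Measure (X × Y) := t⁻¹ • lam.restrict s with hlam₁_def
    set lam₂ : Measure (X × Y) := (lam sᶜ)⁻¹ • lam.restrict sᶜ with hlam₂_def
    -- probability measures
    haveI hP₁ : IsProbabilityMeasure lam₁ := by
      constructor
      rw [hlam₁_def, Measure.smul_apply, smul_eq_mul, Measure.restrict_apply_univ]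
      exact ENNReal.inv_mul_cancel h0 htne
    haveI hP₂ : IsProbabilityMeasure lam₂ := by
      constructor
      rw [hlam₂_def, Measure.smul_apply, smul_eq_mul, Measure.restrict_apply_univ]
      exact ENNReal.inv_mul_cancel hcs0 hcsne
    -- invariance
    have hinv₁ : lam₁.map (Prod.map S T) = lam₁ := by
      rw [hlam₁_def, Measure.map_smul, aux_restrict_invariant hSTm hlamInv hs hsinv]
    have hinv₂ : lam₂.map (Prod.map S T) = lam₂ := by
      rw [hlam₂_def, Measure.map_smul, aux_restrict_invariant hSTm hlamInv hsc hscinv]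
    -- absolute continuity w.r.t. lam
    have hac : ∀ (u : Set (X × Y)), (lam.restrict u) ≪ lam := fun u => restrict_le_self.absolutelyContinuous
    have hac₁ : lam₁ ≪ lam := by
      rw [hlam₁_def]
      exact (AbsolutelyContinuous.rfl.smul_left _).trans (hac s) |>.trans AbsolutelyContinuous.rfl
    have hac₂ : lam₂ ≪ lam := by
      rw [hlam₂_def]
      exact (AbsolutelyContinuous.rfl.smul_left _).trans (hac sᶜ) |>.trans AbsolutelyContinuous.rfl
    -- marginals
    have hsnd : ∀ (m : Measure (X × Y)), IsProbabilityMeasure m → m.map (Prod.map S T) = m →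
        m ≪ lam → m.map Prod.snd = ν := by
      intro m hmP hmInv hmac
      haveI := hmP
      haveI : IsProbabilityMeasure (m.map Prod.snd) :=
        Measure.isProbabilityMeasure_map measurable_snd.aemeasurable
      refine aux_invariant_ac_eq hν (aux_snd_invariant hS.measurable hT hmInv) ?_
      have := hmac.map measurable_snd
      rwa [hlamSnd] at this
    have hsnd₁ : lam₁.map Prod.snd = ν := hsnd lam₁ hP₁ hinv₁ hac₁
    have hsnd₂ : lam₂.map Prod.snd = ν := hsnd lam₂ hP₂ hinv₂ hac₂
    -- costs
    have hint₁ : Integrable c lam₁ := (aux_integrable hcm hcstar hbound lam₁ hsnd₁).1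
    have hint₂ : Integrable c lam₂ := (aux_integrable hcm hcstar hbound lam₂ hsnd₂).1
    have hC₁ : C ≤ ∫ p, c p ∂lam₁ := by
      rw [hC]
      exact csInf_le hbdd ⟨lam₁, hP₁, hinv₁, hsnd₁, rfl⟩
    have hC₂ : C ≤ ∫ p, c p ∂lam₂ := by
      rw [hC]
      exact csInf_le hbdd ⟨lam₂, hP₂, hinv₂, hsnd₂, rfl⟩
    -- the convex decomposition
    have hdecomp : lam = t • lam₁ + (1 - t) • lam₂ := by
      rw [hlam₁_def, hlam₂_def, smul_smul, smul_smul, ENNReal.mul_inv_cancel h0 htne,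
        ← hcsc, ENNReal.mul_inv_cancel hcs0 hcsne, one_smul, one_smul,
        restrict_add_restrict_compl hs]
    have h1mtne : (1 : ℝ≥0∞) - t ≠ ⊤ := ne_top_of_le_ne_top ENNReal.one_ne_top tsub_le_self
    have hsum : C = t.toReal * ∫ p, c p ∂lam₁ + (1 - t).toReal * ∫ p, c p ∂lam₂ := by
      rw [← hlamC]
      calc ∫ p, c p ∂lam = ∫ p, c p ∂(t • lam₁ + (1 - t) • lam₂) := by rw [← hdecomp]
        _ = ∫ p, c p ∂(t • lam₁) + ∫ p, c p ∂((1 - t) • lam₂) :=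
            integral_add_measure (hint₁.smul_measure htne) (hint₂.smul_measure h1mtne)
        _ = t.toReal * ∫ p, c p ∂lam₁ + (1 - t).toReal * ∫ p, c p ∂lam₂ := by
            simp only [integral_smul_measure, smul_eq_mul]
    have ha0 : 0 < t.toReal := ENNReal.toReal_pos h0 htne
    have ha1 : t.toReal < 1 := by
      have := (ENNReal.toReal_lt_toReal htne ENNReal.one_ne_top).mpr ht1
      simpa using this
    have hasub : (1 - t).toReal = 1 - t.toReal := by
      rw [ENNReal.toReal_sub_of_le htle ENNReal.one_ne_top, ENNReal.toReal_one]
    have hsum' : C = t.toReal * ∫ p, c p ∂lam₁ + (1 - t.toReal) * ∫ p, c p ∂lam₂ := by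
      rw [hsum, hasub]
    have hcost₁ : ∫ p, c p ∂lam₁ = C := by
      refine le_antisymm ?_ hC₁
      nlinarith [hC₂, ha0, ha1, hsum']
    -- apply extremality
    have hmem₁ : lam₁ ∈ Jmin := by
      rw [hJmin]; exact ⟨hP₁, hinv₁, hsnd₁, hcost₁⟩
    have hcost₂ : ∫ p, c p ∂lam₂ = C := by
      refine le_antisymm ?_ hC₂
      nlinarith [hC₁, ha0, ha1, hsum']
    have hmem₂ : lam₂ ∈ Jmin := by
      rw [hJmin]; exact ⟨hP₂, hinv₂, hsnd₂, hcost₂⟩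
    obtain ⟨he₁, _⟩ := hext lam₁ hmem₁ lam₂ hmem₂ t ht0 ht1 hdecomp
    have : lam₁ s = 1 := by
      rw [hlam₁_def, Measure.smul_apply, smul_eq_mul, Measure.restrict_apply hs,
        Set.inter_self]
      exact ENNReal.inv_mul_cancel h0 htne
    rw [he₁] at this
    exact h1' this
  · -- ergodic → extreme
    intro herg lam₁ h1 lam₂ h2 t ht0 ht1 heq
    rw [hJmin] at h1 h2
    obtain ⟨hP₁, hinv₁, _, _⟩ := h1
    obtain ⟨hP₂, hinv₂, _, _⟩ := h2
    haveI := hP₁; haveI := hP₂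
    have hmeas : ∀ (u : Set (X × Y)), lam u = 0 → t * lam₁ u + (1 - t) * lam₂ u = 0 := by
      intro u hu
      rw [heq] at hu
      simpa [Measure.add_apply, Measure.smul_apply, smul_eq_mul] using hu
    have hac₁ : lam₁ ≪ lam := by
      intro u hu
      have := hmeas u hu
      have ht : t * lam₁ u = 0 := by
        by_contra hne
        exact hne (by
          have := add_eq_zero.mp this
          exact this.1)
      rcases mul_eq_zero.mp ht with h | h
      · exact absurd h ht0.ne'
      · exact h
    have hac₂ : lam₂ ≪ lam := by
      intro u hu
      have := hmeas u hu
      have ht : (1 - t) * lam₂ u = 0 := (add_eq_zero.mp this).2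
      rcases mul_eq_zero.mp ht with h | h
      · exact absurd h (tsub_pos_iff_lt.mpr ht1).ne'
      · exact h
    exact ⟨aux_invariant_ac_eq herg hinv₁ hac₁, aux_invariant_ac_eq herg hinv₂ hac₂⟩
end

section
/- Let λ ∈ J_min(S:ν) (an optimal joining) with ergodic decomposition λ = ∫ η dξ(η). Then ξ-almost every η is ergodic and belongs to J_min(S:ν), i.e., satisfies ∫ c dη = C(S:ν). -/
open MeasureTheory

/-- The π-system generated by a countable family is countable. -/
lemma aux_countable_generatePiSystem {α : Type*} {s : Set (Set α)} (hs : s.Countable) :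
    (generatePiSystem s).Countable := by
  have hsub : generatePiSystem s ⊆ (fun t => ⋂₀ t) '' {t : Set (Set α) | t.Finite ∧ t ⊆ s} := by
    intro u hu
    induction hu with
    | base h => exact ⟨{_}, ⟨Set.finite_singleton _, by simpa⟩, by simp⟩
    | inter h1 h2 hne ih1 ih2 =>
      obtain ⟨t1, ⟨hf1, hs1⟩, rfl⟩ := ih1
      obtain ⟨t2, ⟨hf2, hs2⟩, rfl⟩ := ih2
      exact ⟨t1 ∪ t2, ⟨hf1.union hf2, Set.union_subset hs1 hs2⟩, by simp [Set.sInter_union]⟩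
  exact Set.Countable.mono hsub ((Set.countable_setOf_finite_subset hs).image _)

/-- a.e.-invariance of sublevel sets of the density of an invariant component measure. -/
lemma aux_sublevel_invariant {Y : Type*} [MeasurableSpace Y] {T : Y → Y} (hT : Measurable T)
    {ν μ : Measure Y} [IsProbabilityMeasure ν] (hνinv : MeasurePreserving T ν ν)
    (hμinv : μ.map T = μ) [IsFiniteMeasure μ]
    {f : Y → ENNReal} (hf : Measurable f) (hden : ν.withDensity f = μ)
    (q : ENNReal) :
    T ⁻¹' {y | f y < q} =ᵐ[ν] {y | f y < q} := by
  set A : Set Y := {y | f y < q} with hA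
  have hAm : MeasurableSet A := hf measurableSet_Iio
  have hTAm : MeasurableSet (T ⁻¹' A) := hT hAm
  have hνA : ν (T ⁻¹' A) = ν A := hνinv.measure_preimage hAm.nullMeasurableSet
  have hμA : μ (T ⁻¹' A) = μ A := by
    conv_rhs => rw [← hμinv]
    rw [Measure.map_apply hT hAm]
  have hsplit1 : ν (A ∩ T ⁻¹' A) + ν (A \ T ⁻¹' A) = ν A := measure_inter_add_diff A hTAm
  have hsplit2 : ν (T ⁻¹' A ∩ A) + ν (T ⁻¹' A \ A) = ν (T ⁻¹' A) := measure_inter_add_diff _ hAm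
  have hsplit1' : μ (A ∩ T ⁻¹' A) + μ (A \ T ⁻¹' A) = μ A := measure_inter_add_diff A hTAm
  have hsplit2' : μ (T ⁻¹' A ∩ A) + μ (T ⁻¹' A \ A) = μ (T ⁻¹' A) := measure_inter_add_diff _ hAm
  have hint : T ⁻¹' A ∩ A = A ∩ T ⁻¹' A := Set.inter_comm _ _
  have hνE : ν (A \ T ⁻¹' A) = ν (T ⁻¹' A \ A) := by
    have h1 : ν (A ∩ T ⁻¹' A) + ν (A \ T ⁻¹' A) = ν (A ∩ T ⁻¹' A) + ν (T ⁻¹' A \ A) := by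
      rw [hsplit1, ← hνA, ← hsplit2, hint]
    exact (ENNReal.add_right_inj (measure_ne_top ν _)).1 h1
  have hμE : μ (A \ T ⁻¹' A) = μ (T ⁻¹' A \ A) := by
    have h1 : μ (A ∩ T ⁻¹' A) + μ (A \ T ⁻¹' A) = μ (A ∩ T ⁻¹' A) + μ (T ⁻¹' A \ A) := by
      rw [hsplit1', ← hμA, ← hsplit2', hint]
    exact (ENNReal.add_right_inj (measure_ne_top μ _)).1 h1
  have hE1m : MeasurableSet (A \ T ⁻¹' A) := hAm.diff hTAm
  have hE2m : MeasurableSet (T ⁻¹' A \ A) := hTAm.diff hAm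
  have hμE1 : μ (A \ T ⁻¹' A) = ∫⁻ y in A \ T ⁻¹' A, f y ∂ν := by
    rw [← hden, withDensity_apply _ hE1m]
  have hμE2 : μ (T ⁻¹' A \ A) = ∫⁻ y in T ⁻¹' A \ A, f y ∂ν := by
    rw [← hden, withDensity_apply _ hE2m]
  have hE1 : ν (A \ T ⁻¹' A) = 0 := by
    by_contra hpos
    have hfleq : ∀ᵐ y ∂(ν.restrict (A \ T ⁻¹' A)), f y ≤ q :=
      (ae_restrict_iff' hE1m).2 (Filter.Eventually.of_forall fun y hy => le_of_lt hy.1)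
    have hconst : ∫⁻ _ in A \ T ⁻¹' A, q ∂ν = q * ν (A \ T ⁻¹' A) := by
      rw [setLIntegral_const]
    have hle : μ (A \ T ⁻¹' A) ≤ q * ν (A \ T ⁻¹' A) := by
      rw [hμE1, ← hconst]
      exact lintegral_mono_ae hfleq
    have hlt : μ (A \ T ⁻¹' A) < q * ν (A \ T ⁻¹' A) := by
      rcases lt_or_eq_of_le hle with h | h
      · exact h
      · exfalso
        have hfin : ∫⁻ y in A \ T ⁻¹' A, f y ∂ν ≠ ⊤ := by
          rw [← hμE1]; exact measure_ne_top μ _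
        have hsub : ∫⁻ y in A \ T ⁻¹' A, (q - f y) ∂ν
            = (∫⁻ _ in A \ T ⁻¹' A, q ∂ν) - ∫⁻ y in A \ T ⁻¹' A, f y ∂ν :=
          lintegral_sub hf hfin hfleq
        have hzero : ∫⁻ y in A \ T ⁻¹' A, (q - f y) ∂ν = 0 := by
          rw [hsub, hconst, ← hμE1, h, tsub_self]
        have hae : ∀ᵐ y ∂(ν.restrict (A \ T ⁻¹' A)), q - f y = 0 := by
          have := (lintegral_eq_zero_iff (measurable_const.sub hf)).1 hzero
          exact this
        have hae2 : ∀ᵐ y ∂(ν.restrict (A \ T ⁻¹' A)), False := by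
          have h3 : ∀ᵐ y ∂(ν.restrict (A \ T ⁻¹' A)), y ∈ A \ T ⁻¹' A :=
            ae_restrict_mem hE1m
          filter_upwards [hae, h3] with y h1 h2
          have hfy : f y < q := h2.1
          have : q ≤ f y := tsub_eq_zero_iff_le.1 h1
          exact absurd hfy (not_lt.2 this)
        have hr0 : ν.restrict (A \ T ⁻¹' A) = 0 :=
          ae_eq_bot.1 (Filter.eventually_false_iff_eq_bot.1 hae2)
        exact hpos (Measure.restrict_eq_zero.1 hr0)
    have hge : q * ν (A \ T ⁻¹' A) ≤ μ (A \ T ⁻¹' A) := by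
      rw [hμE, hμE2]
      calc q * ν (A \ T ⁻¹' A) = q * ν (T ⁻¹' A \ A) := by rw [hνE]
        _ = ∫⁻ _ in T ⁻¹' A \ A, q ∂ν := by rw [setLIntegral_const]
        _ ≤ ∫⁻ y in T ⁻¹' A \ A, f y ∂ν := by
            refine setLIntegral_mono hf fun y hy => ?_
            exact not_lt.1 hy.2
    exact absurd (lt_of_lt_of_le hlt hge) (lt_irrefl _)
  have hE2 : ν (T ⁻¹' A \ A) = 0 := hνE ▸ hE1
  exact (MeasureTheory.ae_eq_set.2 ⟨hE2, hE1⟩)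

/-- An invariant measure dominated by an ergodic probability measure is a multiple of it. -/
lemma aux_ergodic_extreme {Y : Type*} [MeasurableSpace Y] {T : Y → Y} (hT : Measurable T)
    {ν : Measure Y} [IsProbabilityMeasure ν] (hν : Ergodic T ν)
    (μ : Measure Y) (hle : μ ≤ ν) (hμinv : μ.map T = μ) :
    μ = μ Set.univ • ν := by
  haveI : IsFiniteMeasure μ := isFiniteMeasure_of_le ν hle
  have hac : μ ≪ ν := Measure.absolutelyContinuous_of_le hle
  set f := μ.rnDeriv ν with hfdef
  have hf : Measurable f := Measure.measurable_rnDeriv μ ν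
  have hden : ν.withDensity f = μ := Measure.withDensity_rnDeriv_eq μ ν hac
  have hdich : ∀ q : ENNReal, ν {y | f y < q} = 0 ∨ ν {y | f y < q}ᶜ = 0 := by
    intro q
    have hAm : MeasurableSet {y | f y < q} := hf measurableSet_Iio
    have hinv := aux_sublevel_invariant hT hν.toMeasurePreserving hμinv hf hden q
    rcases hν.quasiErgodic.ae_empty_or_univ₀ hAm.nullMeasurableSet hinv with h | h
    · exact Or.inl ((MeasureTheory.ae_eq_empty).1 h)
    · exact Or.inr ((MeasureTheory.ae_eq_univ).1 h)
  classical
  set r : ENNReal := ⨆ (q : {q : ℚ // 0 < q ∧ ν {y | f y < ENNReal.ofReal (q:ℝ)} = 0}),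
      ENNReal.ofReal ((q : ℚ) : ℝ) with hrdef
  have hflt : ν {y | f y < r} = 0 := by
    have hsub : {y | f y < r} ⊆
        ⋃ (q : {q : ℚ // 0 < q ∧ ν {y | f y < ENNReal.ofReal (q:ℝ)} = 0}),
          {y | f y < ENNReal.ofReal ((q:ℚ):ℝ)} := by
      intro y hy
      rw [Set.mem_setOf_eq, hrdef, lt_iSup_iff] at hy
      obtain ⟨q, hq⟩ := hy
      exact Set.mem_iUnion.2 ⟨q, hq⟩
    exact measure_mono_null hsub (measure_iUnion_null fun q => q.2.2)
  have hfgt : ν {y | r < f y} = 0 := by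
    have hsub : {y | r < f y} ⊆
        ⋃ (q : ℚ), {y | r < ENNReal.ofReal (q:ℝ) ∧ ENNReal.ofReal (q:ℝ) ≤ f y} := by
      intro y hy
      rw [Set.mem_setOf_eq] at hy
      obtain ⟨q, _, h1, h2⟩ := ENNReal.lt_iff_exists_rat_btwn.1 hy
      refine Set.mem_iUnion.2 ⟨q, ?_⟩
      constructor
      · simpa [ENNReal.ofReal] using h1
      · simpa [ENNReal.ofReal] using le_of_lt h2
    refine measure_mono_null hsub (measure_iUnion_null fun q => ?_)
    by_cases hrq : r < ENNReal.ofReal (q:ℝ)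
    · have hq0 : (0:ℝ) < (q:ℝ) := by
        by_contra h
        push_neg at h
        rw [ENNReal.ofReal_eq_zero.2 h] at hrq
        exact absurd hrq (by simp)
      have hq0' : 0 < q := by exact_mod_cast hq0
      rcases hdich (ENNReal.ofReal (q:ℝ)) with h | h
      · exfalso
        have : ENNReal.ofReal ((q:ℚ):ℝ) ≤ r := by
          rw [hrdef]
          exact le_iSup (fun (p : {q : ℚ // 0 < q ∧ ν {y | f y < ENNReal.ofReal (q:ℝ)} = 0}) =>
            ENNReal.ofReal ((p:ℚ):ℝ)) ⟨q, hq0', h⟩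
        exact absurd hrq (not_lt.2 this)
      · refine measure_mono_null ?_ h
        intro y hy
        simp only [Set.mem_compl_iff, Set.mem_setOf_eq, not_lt]
        exact hy.2
    · refine measure_mono_null ?_ (measure_empty (μ := ν))
      intro y hy
      exact absurd hy.1 hrq
  have hconst : f =ᵐ[ν] fun _ => r := by
    have hu : ν ({y | f y < r} ∪ {y | r < f y}) = 0 := measure_union_null hflt hfgt
    refine measure_mono_null ?_ hu
    intro y hy
    simp only [Set.mem_compl_iff, Set.mem_setOf_eq] at hy ⊢
    rcases lt_trichotomy (f y) r with h | h | h
    · exact Or.inl h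
    · exact absurd h hy
    · exact Or.inr h
  have hμr : μ = r • ν := by
    rw [← hden, withDensity_congr_ae hconst, withDensity_const]
  have huniv : μ Set.univ = r := by
    rw [hμr]; simp [measure_univ]
  rw [huniv, hμr]

/-- If an optimal joining `λ ∈ J_min(S:ν)` has ergodic decomposition
`λ = ∫ η dξ(η)`, then ξ-almost every component `η` is ergodic and is itself an
optimal joining: `η ∈ J(S:ν)` and `∫ c dη = C(S:ν)`. -/
theorem ergodic_components_of_optimal_joining
    {X Y : Type*}
    [MetricSpace X] [CompactSpace X] [Nonempty X]
    [MeasurableSpace X] [BorelSpace X]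
    [TopologicalSpace Y] [PolishSpace Y] [MeasurableSpace Y] [BorelSpace Y]
    (S : X → X) (hS : Continuous S)
    (T : Y → Y) (hT : Measurable T)
    (ν : Measure Y) [IsProbabilityMeasure ν] (hν : Ergodic T ν)
    (c : X × Y → ℝ) (hc : LowerSemicontinuous c)
    (cstar : Y → ℝ) (hcstar : Integrable cstar ν)
    (hbound : ∀ x y, |c (x, y)| ≤ cstar y)
    (C : ℝ)
    (hC : C = sInf {r : ℝ | ∃ lam : Measure (X × Y), IsProbabilityMeasure lam ∧
        lam.map (Prod.map S T) = lam ∧ lam.map Prod.snd = ν ∧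
        ∫ p, c p ∂lam = r})
    (lam : Measure (X × Y)) (hprob : IsProbabilityMeasure lam)
    (hinv : lam.map (Prod.map S T) = lam) (hmarg : lam.map Prod.snd = ν)
    (hopt : ∫ p, c p ∂lam = C)
    (ξ : Measure (Measure (X × Y))) (hξprob : IsProbabilityMeasure ξ)
    (hcomp : ∀ᵐ η ∂ξ, IsProbabilityMeasure η ∧ η.map (Prod.map S T) = η)
    (herg : ∀ᵐ η ∂ξ, Ergodic (Prod.map S T) η)
    (hdecomp : lam = ξ.join) :
    ∀ᵐ η ∂ξ, Ergodic (Prod.map S T) η ∧ η.map Prod.snd = ν ∧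
      ∫ p, c p ∂η = C := by
  classical
  have hg : Measurable (Prod.map S T) := hS.measurable.prodMap hT
  have hcm : Measurable c := hc.measurable
  -- Step 1: a countable generating π-system for Y
  set K := generatePiSystem (MeasurableSpace.countableGeneratingSet Y) with hK
  have hKc : K.Countable :=
    aux_countable_generatePiSystem MeasurableSpace.countable_countableGeneratingSet
  have hKpi : IsPiSystem K := isPiSystem_generatePiSystem _
  have hKgen : MeasurableSpace.generateFrom K = (inferInstance : MeasurableSpace Y) := by
    rw [hK, generateFrom_generatePiSystem_eq, MeasurableSpace.generateFrom_countableGeneratingSet]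
  have hKmeas : ∀ s ∈ K, MeasurableSet s := fun s hs => by
    have h1 : MeasurableSet[MeasurableSpace.generateFrom K] s :=
      MeasurableSpace.measurableSet_generateFrom hs
    rwa [hKgen] at h1
  -- Step 2: key estimate
  have key : ∀ B : Set Y, MeasurableSet B → ∀ q : ENNReal, q < ν B →
      ξ {η : Measure (X × Y) | η (Prod.snd ⁻¹' B) < q} = 0 := by
    intro B hB q hqB
    set s : Set (X × Y) := Prod.snd ⁻¹' B with hs
    have hsm : MeasurableSet s := measurable_snd hB
    set F := {η : Measure (X × Y) | η s < q} with hF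
    have hFm : MeasurableSet F := Measure.measurable_coe hsm measurableSet_Iio
    by_contra hpos
    set m := (ξ.restrict F).join with hm
    have hmap : ∀ u : Set (X × Y), MeasurableSet u → m u = ∫⁻ η in F, η u ∂ξ := by
      intro u hu; rw [hm, Measure.join_apply hu]
    have hmle : m ≤ lam := by
      rw [hdecomp]
      refine Measure.le_iff.2 fun u hu => ?_
      rw [hmap u hu, Measure.join_apply hu]
      exact lintegral_mono' Measure.restrict_le_self le_rfl
    have hminv : m.map (Prod.map S T) = m := by
      ext u hu
      rw [Measure.map_apply hg hu, hmap _ (hg hu), hmap u hu]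
      refine lintegral_congr_ae ?_
      filter_upwards [ae_restrict_of_ae hcomp] with η hη
      conv_rhs => rw [← hη.2]
      rw [Measure.map_apply hg hu]
    set μ₁ := m.map Prod.snd with hμ₁
    have hμ₁le : μ₁ ≤ ν := by
      refine Measure.le_iff.2 fun u hu => ?_
      rw [hμ₁, Measure.map_apply measurable_snd hu]
      calc m (Prod.snd ⁻¹' u) ≤ lam (Prod.snd ⁻¹' u) :=
            Measure.le_iff.1 hmle _ (measurable_snd hu)
        _ = ν u := by rw [← hmarg, Measure.map_apply measurable_snd hu]
    have hμ₁inv : μ₁.map T = μ₁ := by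
      rw [hμ₁, Measure.map_map hT measurable_snd]
      have heq : T ∘ Prod.snd = Prod.snd ∘ Prod.map S T := rfl
      rw [heq, ← Measure.map_map measurable_snd hg, hminv]
    have hext := aux_ergodic_extreme hT hν μ₁ hμ₁le hμ₁inv
    have hμ₁univ : μ₁ Set.univ = ξ F := by
      rw [hμ₁, Measure.map_apply measurable_snd MeasurableSet.univ, Set.preimage_univ,
        hmap _ MeasurableSet.univ]
      have h1 : ∫⁻ η in F, η Set.univ ∂ξ = ∫⁻ _ in F, 1 ∂ξ := by
        refine lintegral_congr_ae ?_
        filter_upwards [ae_restrict_of_ae hcomp] with η hη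
        haveI := hη.1
        rw [measure_univ]
      rw [h1, setLIntegral_one]
    have hub : μ₁ B ≤ q * ξ F := by
      rw [hμ₁, Measure.map_apply measurable_snd hB, hmap _ hsm]
      calc ∫⁻ η in F, η s ∂ξ ≤ ∫⁻ _ in F, q ∂ξ := by
            refine lintegral_mono_ae ?_
            filter_upwards [ae_restrict_mem hFm] with η hη
            exact le_of_lt hη
        _ = q * ξ F := setLIntegral_const _ _
    have hlb : μ₁ B = ξ F * ν B := by
      conv_lhs => rw [hext, hμ₁univ]
      simp [Measure.smul_apply, smul_eq_mul]
    have hcontr : ξ F * ν B ≤ ξ F * q := by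
      rw [← hlb, mul_comm]
      exact hub
    have hνBq : ν B ≤ q := (ENNReal.mul_le_mul_iff_right hpos (measure_ne_top ξ F)).1 hcontr
    exact absurd hqB (not_lt.2 hνBq)
  -- Step 3: a.e. lower bound on the marginal of each component
  have stepM : ∀ B : Set Y, MeasurableSet B → ∀ᵐ η ∂ξ, ν B ≤ η (Prod.snd ⁻¹' B) := by
    intro B hB
    rw [ae_iff]
    have hsub : {η : Measure (X × Y) | ¬ ν B ≤ η (Prod.snd ⁻¹' B)} ⊆
        ⋃ (q : ℚ), {η : Measure (X × Y) |
          ((Real.toNNReal (q:ℝ) : ENNReal) < ν B) ∧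
          η (Prod.snd ⁻¹' B) < (Real.toNNReal (q:ℝ) : ENNReal)} := by
      intro η hη
      rw [Set.mem_setOf_eq, not_le] at hη
      obtain ⟨q, _, h1, h2⟩ := ENNReal.lt_iff_exists_rat_btwn.1 hη
      exact Set.mem_iUnion.2 ⟨q, h2, h1⟩
    refine measure_mono_null hsub (measure_iUnion_null fun q => ?_)
    by_cases hqB : ((Real.toNNReal (q:ℝ) : ENNReal) < ν B)
    · refine measure_mono_null ?_ (key B hB _ hqB)
      intro η hη
      exact hη.2
    · refine measure_mono_null ?_ (measure_empty (μ := ξ))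
      intro η hη
      exact absurd hη.1 hqB
  -- Step 4: a.e. equality of marginals on each measurable set
  have stepM2 : ∀ B : Set Y, MeasurableSet B → ∀ᵐ η ∂ξ, η (Prod.snd ⁻¹' B) = ν B := by
    intro B hB
    filter_upwards [stepM B hB, stepM Bᶜ hB.compl, hcomp] with η h1 h2 hη
    haveI := hη.1
    refine le_antisymm ?_ h1
    have hc1 : (Prod.snd ⁻¹' Bᶜ : Set (X × Y)) = (Prod.snd ⁻¹' B)ᶜ := rfl
    rw [hc1] at h2
    have e1 : η (Prod.snd ⁻¹' B)ᶜ = 1 - η (Prod.snd ⁻¹' B) := by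
      rw [measure_compl (measurable_snd hB) (measure_ne_top η _), measure_univ]
    have e2 : ν Bᶜ = 1 - ν B := by
      rw [measure_compl hB (measure_ne_top ν _), measure_univ]
    rw [e1, e2] at h2
    exact (ENNReal.sub_le_sub_iff_left prob_le_one ENNReal.one_ne_top).1 h2
  -- Step 5: a.e. the marginal is ν
  have hmargae : ∀ᵐ η ∂ξ, η.map Prod.snd = ν := by
    have hall : ∀ᵐ η ∂ξ, ∀ s ∈ K, η (Prod.snd ⁻¹' s) = ν s :=
      (MeasureTheory.ae_ball_iff hKc).2 fun s hs => stepM2 s (hKmeas s hs)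
    filter_upwards [hall, hcomp] with η h1 hη
    haveI := hη.1
    haveI : IsProbabilityMeasure (η.map Prod.snd) :=
      Measure.isProbabilityMeasure_map measurable_snd.aemeasurable
    refine MeasureTheory.ext_of_generate_finite K hKgen.symm hKpi (fun s hs => ?_) ?_
    · rw [Measure.map_apply measurable_snd (hKmeas s hs)]
      exact h1 s hs
    · simp [measure_univ]
  -- Step 6: integrability facts
  have hcstar0 : ∀ y, 0 ≤ cstar y :=
    fun y => le_trans (abs_nonneg _) (hbound (Classical.arbitrary X) y)
  have hint : ∀ lam' : Measure (X × Y), IsProbabilityMeasure lam' → lam'.map Prod.snd = ν →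
      Integrable c lam' ∧ Integrable (fun p : X × Y => cstar p.2) lam' ∧
        ∫ p : X × Y, cstar p.2 ∂lam' = ∫ y, cstar y ∂ν := by
    intro lam' hp' hm'
    haveI := hp'
    have hcsm' : AEStronglyMeasurable cstar (lam'.map Prod.snd) := by
      rw [hm']; exact hcstar.1
    have hi2 : Integrable (fun p : X × Y => cstar p.2) lam' := by
      have h0 : Integrable cstar (lam'.map Prod.snd) := by rw [hm']; exact hcstar
      exact (integrable_map_measure hcsm' measurable_snd.aemeasurable).1 h0
    have hi1 : Integrable c lam' := by
      refine Integrable.mono' hi2 hcm.aestronglyMeasurable ?_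
      exact Filter.Eventually.of_forall fun p => by
        simpa using hbound p.1 p.2
    have hieq : ∫ p : X × Y, cstar p.2 ∂lam' = ∫ y, cstar y ∂ν := by
      rw [← hm', integral_map measurable_snd.aemeasurable hcsm']
    exact ⟨hi1, hi2, hieq⟩
  -- Step 7: the cost of any joining is bounded below
  have hbdd : ∀ r ∈ {r : ℝ | ∃ lam' : Measure (X × Y), IsProbabilityMeasure lam' ∧
      lam'.map (Prod.map S T) = lam' ∧ lam'.map Prod.snd = ν ∧
      ∫ p, c p ∂lam' = r}, -(∫ y, cstar y ∂ν) ≤ r := by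
    rintro r ⟨lam', hp', _, hm', rfl⟩
    haveI := hp'
    obtain ⟨hi1, hi2, hieq⟩ := hint lam' hp' hm'
    have habs : |∫ p, c p ∂lam'| ≤ ∫ p : X × Y, cstar p.2 ∂lam' := by
      calc |∫ p, c p ∂lam'| ≤ ∫ p, |c p| ∂lam' := by
            simpa [Real.norm_eq_abs] using norm_integral_le_integral_norm (μ := lam') c
        _ ≤ ∫ p : X × Y, cstar p.2 ∂lam' := by
            refine integral_mono hi1.abs hi2 fun p => ?_
            simpa using hbound p.1 p.2
    rw [hieq] at habs
    linarith [neg_abs_le (∫ p, c p ∂lam'), abs_nonneg (∫ p, c p ∂lam')]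
  have hClb : ∀ r ∈ {r : ℝ | ∃ lam' : Measure (X × Y), IsProbabilityMeasure lam' ∧
      lam'.map (Prod.map S T) = lam' ∧ lam'.map Prod.snd = ν ∧
      ∫ p, c p ∂lam' = r}, C ≤ r := by
    intro r hr
    rw [hC]
    exact csInf_le ⟨-(∫ y, cstar y ∂ν), hbdd⟩ hr
  -- Step 8: a.e. component has cost ≥ C
  have hgeC : ∀ᵐ η ∂ξ, C ≤ ∫ p, c p ∂η := by
    filter_upwards [hcomp, hmargae] with η hη hm'
    exact hClb _ ⟨η, hη.1, hη.2, hm', rfl⟩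
  -- Step 9: Fubini for the join
  set φp : Measure (X × Y) → ENNReal := fun η => ∫⁻ p, ENNReal.ofReal (c p) ∂η with hφp
  set φm : Measure (X × Y) → ENNReal := fun η => ∫⁻ p, ENNReal.ofReal (-(c p)) ∂η with hφm
  have hφpm : Measurable φp := Measure.measurable_lintegral hcm.ennreal_ofReal
  have hφmm : Measurable φm := Measure.measurable_lintegral hcm.neg.ennreal_ofReal
  have hjp : ∫⁻ η, φp η ∂ξ = ∫⁻ p, ENNReal.ofReal (c p) ∂lam := by
    rw [hdecomp, Measure.lintegral_join hcm.ennreal_ofReal.aemeasurable]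
  have hjm : ∫⁻ η, φm η ∂ξ = ∫⁻ p, ENNReal.ofReal (-(c p)) ∂lam := by
    rw [hdecomp, Measure.lintegral_join (f := fun p => ENNReal.ofReal (-(c p))) hcm.neg.ennreal_ofReal.aemeasurable]
  have hbnd : ∫⁻ p : X × Y, ENNReal.ofReal (cstar p.2) ∂lam < ⊤ := by
    have hi2 : Integrable (fun p : X × Y => cstar p.2) lam := (hint lam hprob hmarg).2.1
    have hle : ∫⁻ p : X × Y, ENNReal.ofReal (cstar p.2) ∂lam
        ≤ ∫⁻ p : X × Y, (‖cstar p.2‖₊ : ENNReal) ∂lam :=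
      lintegral_mono fun p => Real.ofReal_le_enorm _
    exact lt_of_le_of_lt hle hi2.2
  have hpfin : ∫⁻ p, ENNReal.ofReal (c p) ∂lam ≠ ⊤ := by
    refine (lt_of_le_of_lt (lintegral_mono fun p => ?_) hbnd).ne
    exact ENNReal.ofReal_le_ofReal (le_trans (le_abs_self _) (hbound p.1 p.2))
  have hmfin : ∫⁻ p, ENNReal.ofReal (-(c p)) ∂lam ≠ ⊤ := by
    refine (lt_of_le_of_lt (lintegral_mono fun p => ?_) hbnd).ne
    exact ENNReal.ofReal_le_ofReal (le_trans (neg_le_abs _) (hbound p.1 p.2))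
  have haep : ∀ᵐ η ∂ξ, φp η < ⊤ := ae_lt_top hφpm (by rw [hjp]; exact hpfin)
  have haem : ∀ᵐ η ∂ξ, φm η < ⊤ := ae_lt_top hφmm (by rw [hjm]; exact hmfin)
  set g : Measure (X × Y) → ℝ := fun η => (φp η).toReal - (φm η).toReal with hgdef
  have hintp : Integrable (fun η => (φp η).toReal) ξ :=
    integrable_toReal_of_lintegral_ne_top hφpm.aemeasurable (by rw [hjp]; exact hpfin)
  have hintm : Integrable (fun η => (φm η).toReal) ξ :=
    integrable_toReal_of_lintegral_ne_top hφmm.aemeasurable (by rw [hjm]; exact hmfin)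
  have hgint : Integrable g ξ := hintp.sub hintm
  have hgval : ∫ η, g η ∂ξ = C := by
    rw [hgdef]
    rw [integral_sub hintp hintm, integral_toReal hφpm.aemeasurable haep,
      integral_toReal hφmm.aemeasurable haem, hjp, hjm]
    rw [← hopt, integral_eq_lintegral_pos_part_sub_lintegral_neg_part (hint lam hprob hmarg).1]
  have hgae : ∀ᵐ η ∂ξ, ∫ p, c p ∂η = g η := by
    filter_upwards [hcomp, hmargae] with η hη hm'
    haveI := hη.1
    exact integral_eq_lintegral_pos_part_sub_lintegral_neg_part (hint η hη.1 hm').1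
  -- Step 10: conclude cost = C a.e.
  have hnonneg : 0 ≤ᵐ[ξ] fun η => g η - C := by
    filter_upwards [hgeC, hgae] with η h1 h2
    simp only [Pi.zero_apply]
    rw [← h2]
    linarith
  have hzero : ∫ η, (g η - C) ∂ξ = 0 := by
    rw [integral_sub hgint (integrable_const C), hgval, integral_const, probReal_univ]
    simp
  have hfinal : (fun η => g η - C) =ᵐ[ξ] 0 :=
    (integral_eq_zero_iff_of_nonneg_ae hnonneg (hgint.sub (integrable_const C))).1 hzero
  filter_upwards [herg, hmargae, hgae, hfinal] with η h1 h2 h3 h4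
  refine ⟨h1, h2, ?_⟩
  have : g η - C = 0 := h4
  rw [h3]
  linarith
end

section
/- Let ν be a shift-invariant Borel probability measure on {0,1}^ℕ and let L_θ ⊆ {0,1}^ℕ be a closed shift-invariant set. Define d̄(θ:ν) = inf_μ d̄(μ,ν) over all shift-invariant probability measures μ with μ(L_θ) = 1, where d̄(μ,ν) is the minimal value of λ({(a,b) : a_0 ≠ b_0}) over joinings λ of μ and ν (shift × shift invariant couplings). Then d̄(θ:ν) = 0 if and only if ν(L_θ) = 1. -/
open MeasureTheory Filter Topology
open scoped ENNReal

/-- The left shift on binary sequences. -/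
def binShift (a : ℕ → Bool) (i : ℕ) : Bool := a (i + 1)

/-- Ornstein's d-bar distance between two shift-invariant measures on
`{0,1}^ℕ`: the minimal probability of disagreement in the first coordinate
over shift-invariant joinings. -/
noncomputable def dbar (μ ν : Measure (ℕ → Bool)) : ℝ≥0∞ :=
  ⨅ (lam : Measure ((ℕ → Bool) × (ℕ → Bool)))
    (_ : IsProbabilityMeasure lam ∧
      lam.map (Prod.map binShift binShift) = lam ∧
      lam.map Prod.fst = μ ∧ lam.map Prod.snd = ν),
    lam {p | p.1 0 ≠ p.2 0}

/-- `d̄(θ:ν)`: the minimal d-bar distance from `ν` to shift-invariant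
measures supported on `L`. -/
noncomputable def dbarTo (L : Set (ℕ → Bool)) (ν : Measure (ℕ → Bool)) : ℝ≥0∞ :=
  ⨅ (μ : Measure (ℕ → Bool))
    (_ : IsProbabilityMeasure μ ∧ μ.map binShift = μ ∧ μ L = 1),
    dbar μ ν

lemma measurable_binShift : Measurable binShift :=
  measurable_pi_lambda _ fun i => measurable_pi_apply (i + 1)

lemma binShift_iterate (k : ℕ) (a : ℕ → Bool) (i : ℕ) :
    binShift^[k] a i = a (i + k) := by
  induction k generalizing a i with
  | zero => rfl
  | succ k ih =>
    rw [Function.iterate_succ_apply, ih]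
    simp [binShift, Nat.add_assoc, Nat.add_comm 1 k]

lemma measurableSet_disagree (i : ℕ) :
    MeasurableSet {p : (ℕ → Bool) × (ℕ → Bool) | p.1 i ≠ p.2 i} := by
  have h1 : Measurable fun p : (ℕ → Bool) × (ℕ → Bool) => p.1 i :=
    (measurable_pi_apply i).comp measurable_fst
  have h2 : Measurable fun p : (ℕ → Bool) × (ℕ → Bool) => p.2 i :=
    (measurable_pi_apply i).comp measurable_snd
  have : {p : (ℕ → Bool) × (ℕ → Bool) | p.1 i = p.2 i} =
      ⋃ b : Bool, {p | p.1 i = b} ∩ {p | p.2 i = b} := by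
    ext p; simp only [Set.mem_setOf_eq, Set.mem_iUnion, Set.mem_inter_iff]
    constructor
    · intro h; exact ⟨p.2 i, h, rfl⟩
    · rintro ⟨b, h1, h2⟩; rw [h1, h2]
  have hm : MeasurableSet {p : (ℕ → Bool) × (ℕ → Bool) | p.1 i = p.2 i} := by
    rw [this]
    exact MeasurableSet.iUnion fun b =>
      (h1 (measurableSet_singleton b)).inter (h2 (measurableSet_singleton b))
  exact hm.compl

/-- The set of sequences whose length-`n` prefix cannot be extended to an
element of `L`. -/
def badPrefix (L : Set (ℕ → Bool)) (n : ℕ) : Set (ℕ → Bool) :=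
  {b | ∀ a : ℕ → Bool, (∀ i < n, a i = b i) → a ∉ L}

lemma measurableSet_badPrefix (L : Set (ℕ → Bool)) (n : ℕ) :
    MeasurableSet (badPrefix L n) := by
  set r : (ℕ → Bool) → (Fin n → Bool) := fun b i => b i with hr
  have hrm : Measurable r := by
    rw [hr]
    exact measurable_pi_lambda _ fun i => measurable_pi_apply _
  have key : badPrefix L n = r ⁻¹' (r '' badPrefix L n) := by
    ext b
    constructor
    · intro hb; exact Set.mem_preimage.2 ⟨b, hb, rfl⟩
    · rintro ⟨b', hb', hrb⟩
      intro a ha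
      apply hb' a
      intro i hi
      have := congrFun hrb (⟨i, hi⟩ : Fin n)
      simp only [hr] at this
      rw [ha i hi, ← this]
  rw [key]
  exact hrm ((Set.to_countable _).measurableSet)

lemma compl_subset_iUnion_badPrefix (L : Set (ℕ → Bool)) (hL : IsClosed L) :
    Lᶜ ⊆ ⋃ n, badPrefix L n := by
  intro b hb
  obtain ⟨I, u, hu, hsub⟩ := isOpen_pi_iff.mp hL.isOpen_compl b hb
  refine Set.mem_iUnion.2 ⟨(I.sup id) + 1, ?_⟩
  intro a ha
  have : a ∈ (↑I : Set ℕ).pi u := by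
    intro i hi
    have hi' : i < I.sup id + 1 := Nat.lt_succ_of_le (Finset.le_sup (f := id) hi)
    rw [ha i hi']
    exact (hu i hi).2
  exact hsub this

/-- `d̄(θ:ν) = 0` if and only if `ν(L_θ) = 1`. -/
theorem dbarTo_eq_zero_iff
    (ν : Measure (ℕ → Bool)) [IsProbabilityMeasure ν]
    (hν : ν.map binShift = ν)
    (L : Set (ℕ → Bool)) (hLclosed : IsClosed L)
    (hLinv : Set.MapsTo binShift L L) :
    dbarTo L ν = 0 ↔ ν L = 1 := by
  have hLm : MeasurableSet L := hLclosed.measurableSet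
  constructor
  · -- hard direction
    intro h
    rw [← prob_compl_eq_zero_iff hLm]
    have key : ∀ n : ℕ, ν (badPrefix L n) = 0 := by
      intro n
      -- show ν (badPrefix L n) ≤ δ for every δ > 0
      have hle : ∀ δ : ℝ≥0∞, 0 < δ → ν (badPrefix L n) ≤ δ := by
        intro δ hδ
        set ε : ℝ≥0∞ := δ / (n + 1) with hε
        have hεpos : 0 < ε := by
          apply ENNReal.div_pos hδ.ne' (by simp)
        -- extract a joining with disagreement < ε
        have h1 : dbarTo L ν < ε := h ▸ hεpos
        rw [dbarTo] at h1
        obtain ⟨μ, h1⟩ := iInf_lt_iff.mp h1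
        obtain ⟨⟨hμprob, hμinv, hμL⟩, h1⟩ := iInf_lt_iff.mp h1
        rw [dbar] at h1
        obtain ⟨lam, h1⟩ := iInf_lt_iff.mp h1
        obtain ⟨⟨hlprob, hlinv, hlfst, hlsnd⟩, hlD⟩ := iInf_lt_iff.mp h1
        -- shift invariance of lam at every coordinate
        have hT : Measurable (Prod.map binShift binShift) :=
          (measurable_binShift.comp measurable_fst).prodMk
            (measurable_binShift.comp measurable_snd)
        have hTk : ∀ k : ℕ, Measurable (Prod.map binShift binShift)^[k] :=
          fun k => hT.iterate k
        have hinvk : ∀ k : ℕ,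
            lam.map (Prod.map binShift binShift)^[k] = lam := by
          intro k
          induction k with
          | zero => simp
          | succ k ih =>
            rw [Function.iterate_succ, ← Measure.map_map (hTk k) hT, hlinv, ih]
        have hcoord : ∀ k : ℕ, lam {p | p.1 k ≠ p.2 k} < ε := by
          intro k
          have hpre : (Prod.map binShift binShift)^[k] ⁻¹'
              {p : (ℕ → Bool) × (ℕ → Bool) | p.1 0 ≠ p.2 0}
              = {p | p.1 k ≠ p.2 k} := by
            ext p
            simp [Prod.map_iterate, Prod.map, binShift_iterate]
          calc lam {p | p.1 k ≠ p.2 k}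
              = lam.map (Prod.map binShift binShift)^[k]
                  {p : (ℕ → Bool) × (ℕ → Bool) | p.1 0 ≠ p.2 0} := by
                rw [Measure.map_apply (hTk k) (measurableSet_disagree 0), hpre]
            _ = lam {p | p.1 0 ≠ p.2 0} := by rw [hinvk k]
            _ < ε := hlD
        -- the main estimate
        have hsub : Prod.snd ⁻¹' badPrefix L n ⊆
            (Prod.fst ⁻¹' Lᶜ) ∪ ⋃ i ∈ Finset.range n,
              {p : (ℕ → Bool) × (ℕ → Bool) | p.1 i ≠ p.2 i} := by
          intro p hp
          by_cases hfst : p.1 ∈ L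
          · right
            by_contra hall
            simp only [Set.mem_iUnion, Finset.mem_range, Set.mem_setOf_eq,
              not_exists, not_not] at hall
            exact hp p.1 (fun i hi => hall i hi) hfst
          · exact Or.inl hfst
        have hfst0 : lam (Prod.fst ⁻¹' Lᶜ) = 0 := by
          rw [← Measure.map_apply measurable_fst hLm.compl, hlfst]
          exact (prob_compl_eq_zero_iff hLm).2 hμL
        have hν' : ν (badPrefix L n) = lam (Prod.snd ⁻¹' badPrefix L n) := by
          rw [← hlsnd, Measure.map_apply measurable_snd (measurableSet_badPrefix L n)]
        rw [hν']
        calc lam (Prod.snd ⁻¹' badPrefix L n)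
            ≤ lam ((Prod.fst ⁻¹' Lᶜ) ∪ ⋃ i ∈ Finset.range n,
                {p : (ℕ → Bool) × (ℕ → Bool) | p.1 i ≠ p.2 i}) :=
              measure_mono hsub
          _ ≤ lam (Prod.fst ⁻¹' Lᶜ) + lam (⋃ i ∈ Finset.range n,
                {p : (ℕ → Bool) × (ℕ → Bool) | p.1 i ≠ p.2 i}) :=
              measure_union_le _ _
          _ ≤ 0 + ∑ i ∈ Finset.range n, lam {p | p.1 i ≠ p.2 i} := by
              rw [hfst0]
              exact add_le_add le_rfl (measure_biUnion_finset_le _ _)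
          _ ≤ ∑ _i ∈ Finset.range n, ε := by
              rw [zero_add]
              exact Finset.sum_le_sum fun i _ => (hcoord i).le
          _ = n * ε := by rw [Finset.sum_const, Finset.card_range, nsmul_eq_mul]
          _ ≤ (n + 1) * ε := mul_le_mul_left (by simp) ε
          _ = δ := by
              rw [hε]
              exact ENNReal.mul_div_cancel (by simp) (by simp)
      -- conclude
      have hle0 : ν (badPrefix L n) ≤ 0 := by
        apply ENNReal.le_of_forall_pos_le_add
        intro ε hε _
        simpa using hle ε (by exact_mod_cast hε)
      exact le_antisymm hle0 zero_le
    have hfin : ν Lᶜ ≤ 0 :=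
      calc ν Lᶜ ≤ ν (⋃ n, badPrefix L n) :=
            measure_mono (compl_subset_iUnion_badPrefix L hLclosed)
        _ = 0 := measure_iUnion_null key
    exact le_antisymm hfin zero_le
  · -- easy direction: take μ = ν and the diagonal joining
    intro hνL
    have hdiag : Measurable fun a : ℕ → Bool => (a, a) :=
      measurable_id.prodMk measurable_id
    set lam : Measure ((ℕ → Bool) × (ℕ → Bool)) :=
      ν.map (fun a => (a, a)) with hlam
    have hprob : IsProbabilityMeasure lam := Measure.isProbabilityMeasure_map hdiag.aemeasurable
    have hT : Measurable (Prod.map binShift binShift) :=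
      (measurable_binShift.comp measurable_fst).prodMk
        (measurable_binShift.comp measurable_snd)
    have hinv : lam.map (Prod.map binShift binShift) = lam := by
      rw [hlam, Measure.map_map hT hdiag]
      have hcomp : (Prod.map binShift binShift ∘ fun a => (a, a)) =
          ((fun a => (a, a)) ∘ binShift) := rfl
      rw [hcomp, ← Measure.map_map hdiag measurable_binShift, hν]
    have hfst : lam.map Prod.fst = ν := by
      rw [hlam, Measure.map_map measurable_fst hdiag]
      have : (Prod.fst ∘ fun a : ℕ → Bool => (a, a)) = id := rfl
      rw [this, Measure.map_id]
    have hsnd : lam.map Prod.snd = ν := by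
      rw [hlam, Measure.map_map measurable_snd hdiag]
      have : (Prod.snd ∘ fun a : ℕ → Bool => (a, a)) = id := rfl
      rw [this, Measure.map_id]
    have hD : lam {p | p.1 0 ≠ p.2 0} = 0 := by
      rw [hlam, Measure.map_apply hdiag (measurableSet_disagree 0)]
      have hemp : ((fun a : ℕ → Bool => (a, a)) ⁻¹'
          {p : (ℕ → Bool) × (ℕ → Bool) | p.1 0 ≠ p.2 0}) = ∅ := by
        ext a; simp
      rw [hemp]; exact measure_empty
    have h1 : dbar ν ν ≤ 0 := by
      calc dbar ν ν ≤ lam {p | p.1 0 ≠ p.2 0} :=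
            iInf₂_le lam ⟨hprob, hinv, hfst, hsnd⟩
        _ = 0 := hD
    have h2 : dbarTo L ν ≤ dbar ν ν :=
      iInf₂_le ν ⟨inferInstance, hν, hνL⟩
    exact le_antisymm (h2.trans h1) zero_le
end

section
/- Furstenberg's disjointness theorem (special case used): if λ₃ is a shift-invariant measure on a product of binary sequence spaces with Kolmogorov–Sinai entropy zero, and η is an i.i.d. Bernoulli(p) product measure on {0,1}^ℕ, then every shift-invariant joining of λ₃ and η equals the product measure λ₃ ⊗ η. -/
set_option linter.unusedSectionVars false
set_option maxHeartbeats 1000000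

open MeasureTheory ProbabilityTheory Filter Topology
open scoped ENNReal

/-- The product shift on a product of two binary sequence spaces. -/
def pairShift : (ℕ → Bool) × (ℕ → Bool) → (ℕ → Bool) × (ℕ → Bool) :=
  Prod.map binShift binShift

/-- Shannon entropy of the length-`n` block distribution of a measure on a
product of two binary sequence spaces (alphabet `Bool × Bool`). -/
noncomputable def blockEntropyPair
    (μ : Measure ((ℕ → Bool) × (ℕ → Bool))) (n : ℕ) : ℝ :=
  ∑ w : Fin n → Bool × Bool,
    Real.negMulLog
      ((μ {q : (ℕ → Bool) × (ℕ → Bool) |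
          ∀ i : Fin n, (q.1 (i : ℕ), q.2 (i : ℕ)) = w i}).toReal)

/-- Zero Kolmogorov–Sinai entropy for a shift-invariant measure on the
product of two binary sequence spaces. -/
def HasZeroEntropyPair (μ : Measure ((ℕ → Bool) × (ℕ → Bool))) : Prop :=
  Tendsto (fun n : ℕ => blockEntropyPair μ n / n) atTop (𝓝 0)

/-- Bernoulli(p) measure on `Bool` (`true` with probability `p`). -/
noncomputable def bernoulliBool (p : ℝ) : Measure Bool :=
  (ENNReal.ofReal p) • Measure.dirac true +
    (ENNReal.ofReal (1 - p)) • Measure.dirac false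

namespace FurstAux

open Finset

lemma negMulLog_sum_le {α : Type*} [Fintype α] (f : α → ℝ) (hf : ∀ a, 0 ≤ f a) :
    Real.negMulLog (∑ a, f a) ≤ ∑ a, Real.negMulLog (f a) := by
  have hS : ∀ a, f a ≤ ∑ a, f a := fun a =>
    Finset.single_le_sum (fun a _ => hf a) (Finset.mem_univ a)
  have : Real.negMulLog (∑ a, f a) = ∑ a, -(f a * Real.log (∑ b, f b)) := by
    rw [Real.negMulLog, neg_mul, Finset.sum_mul, ← Finset.sum_neg_distrib]
  rw [this]
  apply Finset.sum_le_sum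
  intro a _
  rw [Real.negMulLog]
  rcases eq_or_lt_of_le (hf a) with h | h
  · simp [← h]
  · have hlog : Real.log (f a) ≤ Real.log (∑ b, f b) :=
      Real.log_le_log (by exact h) (hS a)
    nlinarith
lemma klterm_le (x y : ℝ) (hx : 0 ≤ x) (hy : 0 ≤ y) (hxy : x ≠ 0 → y ≠ 0) :
    x - y ≤ x * Real.log x - x * Real.log y := by
  rcases eq_or_lt_of_le hx with h | hx'
  · simp [← h]; linarith
  · have hy' : 0 < y := lt_of_le_of_ne hy (Ne.symm (hxy (ne_of_gt hx')))
    have := Real.log_le_sub_one_of_pos (x := y / x) (by positivity)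
    rw [Real.log_div (ne_of_gt hy') (ne_of_gt hx')] at this
    have h2 : x * (Real.log y - Real.log x) ≤ x * (y / x - 1) :=
      mul_le_mul_of_nonneg_left this hx
    have h3 : x * (y / x - 1) = y - x := by field_simp
    linarith

lemma klterm_eq (x y : ℝ) (hx : 0 ≤ x) (hy : 0 ≤ y) (hxy : x ≠ 0 → y ≠ 0)
    (heq : x * Real.log x - x * Real.log y = x - y) : x = y := by
  rcases eq_or_lt_of_le hx with h | hx'
  · simp [← h] at heq ⊢; linarith
  · have hy' : 0 < y := lt_of_le_of_ne hy (Ne.symm (hxy (ne_of_gt hx')))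
    by_contra hne
    have hne' : y / x ≠ 1 := by
      intro h1; exact hne (by field_simp at h1; linarith)
    have := Real.log_lt_sub_one_of_pos (x := y / x) (by positivity) hne'
    rw [Real.log_div (ne_of_gt hy') (ne_of_gt hx')] at this
    have h2 : x * (Real.log y - Real.log x) < x * (y / x - 1) :=
      (mul_lt_mul_iff_right₀ hx').mpr this
    have h3 : x * (y / x - 1) = y - x := by field_simp
    linarith

lemma sum_ite_pull {α : Type*} [Fintype α] (P : Prop) [Decidable P] (f : α → ℝ) :
    ∑ a, (if P then f a else 0) = if P then ∑ a, f a else 0 := by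
  split_ifs <;> simp


variable {α β γ : Type*} [Fintype α] [Fintype β] [Fintype γ]

lemma ite_nonneg' (P : Prop) [Decidable P] (x : ℝ) (hx : 0 ≤ x) :
    0 ≤ if P then x else 0 := by split_ifs <;> simp [hx]

theorem gibbs (r : α × β → ℝ) (h0 : ∀ q, 0 ≤ r q) (h1 : ∑ q, r q = 1) :
    (∑ q, Real.negMulLog (r q) ≤
      (∑ a, Real.negMulLog (∑ b, r (a, b))) + ∑ b, Real.negMulLog (∑ a, r (a, b))) ∧
    (∑ q, Real.negMulLog (r q) =
      (∑ a, Real.negMulLog (∑ b, r (a, b))) + ∑ b, Real.negMulLog (∑ a, r (a, b)) →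
      ∀ q : α × β, r q = (∑ b, r (q.1, b)) * (∑ a, r (a, q.2))) := by
  classical
  set r1 : α → ℝ := fun a => ∑ b, r (a, b) with hr1
  set r2 : β → ℝ := fun b => ∑ a, r (a, b) with hr2
  have hr1n : ∀ a, 0 ≤ r1 a := fun a => Finset.sum_nonneg fun b _ => h0 _
  have hr2n : ∀ b, 0 ≤ r2 b := fun b => Finset.sum_nonneg fun a _ => h0 _
  have hle1 : ∀ q : α × β, r q ≤ r1 q.1 := fun q => by
    simpa using Finset.single_le_sum (f := fun b => r (q.1, b))
      (fun b _ => h0 _) (Finset.mem_univ q.2)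
  have hle2 : ∀ q : α × β, r q ≤ r2 q.2 := fun q => by
    simpa using Finset.single_le_sum (f := fun a => r (a, q.2))
      (fun a _ => h0 _) (Finset.mem_univ q.1)
  set y : α × β → ℝ := fun q => r1 q.1 * r2 q.2 with hy
  have hyn : ∀ q, 0 ≤ y q := fun q => mul_nonneg (hr1n _) (hr2n _)
  have hne : ∀ q : α × β, r q ≠ 0 → y q ≠ 0 := by
    intro q h
    have h' : 0 < r q := lt_of_le_of_ne (h0 q) (Ne.symm h)
    exact ne_of_gt (mul_pos (lt_of_lt_of_le h' (hle1 q)) (lt_of_lt_of_le h' (hle2 q)))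
  set T : α × β → ℝ := fun q => r q * Real.log (r q) - r q * Real.log (y q) with hT
  have hTk : ∀ q, r q - y q ≤ T q := fun q => klterm_le _ _ (h0 q) (hyn q) (hne q)
  have hs1 : ∑ a, r1 a = 1 := by rw [← h1, Fintype.sum_prod_type]
  have hs2 : ∑ b, r2 b = 1 := by rw [← h1, Fintype.sum_prod_type_right]
  have hsy : ∑ q, y q = 1 := by
    calc ∑ q : α × β, y q = ∑ a, ∑ b, r1 a * r2 b := Fintype.sum_prod_type y
    _ = ∑ a, r1 a * ∑ b, r2 b := by simp [← Finset.mul_sum]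
    _ = 1 := by rw [hs2]; simpa using hs1
  have hsry : ∑ q, (r q - y q) = 0 := by
    rw [Finset.sum_sub_distrib, h1, hsy, sub_self]
  have hsplit : ∀ q : α × β, r q * Real.log (y q)
      = r q * Real.log (r1 q.1) + r q * Real.log (r2 q.2) := by
    intro q
    rcases eq_or_ne (r q) 0 with h | h
    · simp [h]
    · have h' : 0 < r q := lt_of_le_of_ne (h0 q) (Ne.symm h)
      have h1' : r1 q.1 ≠ 0 := ne_of_gt (lt_of_lt_of_le h' (hle1 q))
      have h2' : r2 q.2 ≠ 0 := ne_of_gt (lt_of_lt_of_le h' (hle2 q))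
      rw [hy]
      show r q * Real.log (r1 q.1 * r2 q.2) = _
      rw [Real.log_mul h1' h2']
      ring
  have hm1 : ∑ q : α × β, r q * Real.log (r1 q.1) = ∑ a, r1 a * Real.log (r1 a) := by
    rw [Fintype.sum_prod_type]
    refine Finset.sum_congr rfl fun a _ => ?_
    show ∑ b, r (a, b) * Real.log (r1 a) = r1 a * Real.log (r1 a)
    exact (Finset.sum_mul _ _ _).symm
  have hm2 : ∑ q : α × β, r q * Real.log (r2 q.2) = ∑ b, r2 b * Real.log (r2 b) := by
    rw [Fintype.sum_prod_type_right]
    refine Finset.sum_congr rfl fun b _ => ?_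
    show ∑ a, r (a, b) * Real.log (r2 b) = r2 b * Real.log (r2 b)
    exact (Finset.sum_mul _ _ _).symm
  have hsumT : ∑ q, T q =
      ((∑ a, Real.negMulLog (r1 a)) + ∑ b, Real.negMulLog (r2 b)) - ∑ q, Real.negMulLog (r q) := by
    rw [hT]
    simp only [Finset.sum_sub_distrib]
    rw [Finset.sum_congr rfl (fun q _ => hsplit q), Finset.sum_add_distrib, hm1, hm2]
    simp only [Real.negMulLog, neg_mul, Finset.sum_neg_distrib]
    ring
  have hTge : (0:ℝ) ≤ ∑ q, T q := by
    calc (0:ℝ) = ∑ q, (r q - y q) := hsry.symm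
    _ ≤ ∑ q, T q := Finset.sum_le_sum fun q _ => hTk q
  constructor
  · linarith [hTge, hsumT]
  · intro heq
    have hz : ∑ q, (T q - (r q - y q)) = 0 := by
      rw [Finset.sum_sub_distrib, hsry, hsumT, heq]
      ring
    have hterm : ∀ q ∈ Finset.univ, T q - (r q - y q) = 0 := by
      rw [← Finset.sum_eq_zero_iff_of_nonneg (fun q _ => sub_nonneg.2 (hTk q))]
      exact hz
    intro q
    have h3 := hterm q (Finset.mem_univ q)
    have hTq : T q = r q * Real.log (r q) - r q * Real.log (y q) := rfl
    have h2 := klterm_eq (r q) (y q) (h0 q) (hyn q) (hne q) (by linarith)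
    exact h2

theorem ssa [DecidableEq γ] (r : α × β → ℝ) (h0 : ∀ q, 0 ≤ r q) (h1 : ∑ q, r q = 1) (ρ : β → γ) :
    (∑ q, Real.negMulLog (r q)) +
      (∑ c, Real.negMulLog (∑ b, if ρ b = c then (∑ a, r (a, b)) else 0))
    ≤ (∑ s : α × γ, Real.negMulLog (∑ b, if ρ b = s.2 then r (s.1, b) else 0))
      + ∑ b, Real.negMulLog (∑ a, r (a, b)) := by
  classical
  set V : β → ℝ := fun b => ∑ a, r (a, b) with hV
  set UW : α → γ → ℝ := fun a c => ∑ b, if ρ b = c then r (a, b) else 0 with hUW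
  set W : γ → ℝ := fun c => ∑ b, if ρ b = c then V b else 0 with hW
  have hVn : ∀ b, 0 ≤ V b := fun b => Finset.sum_nonneg fun a _ => h0 _
  have hUWn : ∀ a c, 0 ≤ UW a c := fun a c =>
    Finset.sum_nonneg fun b _ => ite_nonneg' _ _ (h0 _)
  have hWn : ∀ c, 0 ≤ W c := fun c =>
    Finset.sum_nonneg fun b _ => ite_nonneg' _ _ (hVn _)
  have hrV : ∀ q : α × β, r q ≤ V q.2 := fun q => by
    simpa using Finset.single_le_sum (f := fun a => r (a, q.2))
      (fun a _ => h0 _) (Finset.mem_univ q.1)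
  have hVW : ∀ b, V b ≤ W (ρ b) := by
    intro b
    have := Finset.single_le_sum (f := fun b' => if ρ b' = ρ b then V b' else 0)
      (fun b' _ => ite_nonneg' _ _ (hVn b')) (Finset.mem_univ b)
    simpa using this
  have hrUW : ∀ q : α × β, r q ≤ UW q.1 (ρ q.2) := by
    intro q
    have := Finset.single_le_sum (f := fun b' => if ρ b' = ρ q.2 then r (q.1, b') else 0)
      (fun b' _ => ite_nonneg' _ _ (h0 _)) (Finset.mem_univ q.2)
    simpa using this
  have hAUW : ∀ c, ∑ a, UW a c = W c := by
    intro c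
    rw [hUW, hW, Finset.sum_comm]
    refine Finset.sum_congr rfl fun b _ => ?_
    split_ifs with h <;> simp [h, hV]
  set y : α × β → ℝ := fun q => UW q.1 (ρ q.2) * (V q.2 / W (ρ q.2)) with hy
  have hyn : ∀ q, 0 ≤ y q := fun q =>
    mul_nonneg (hUWn _ _) (div_nonneg (hVn _) (hWn _))
  set T : α × β → ℝ := fun q => r q * Real.log (r q) + r q * Real.log (W (ρ q.2))
      - r q * Real.log (UW q.1 (ρ q.2)) - r q * Real.log (V q.2) with hT
  have hTk : ∀ q, r q - y q ≤ T q := by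
    intro q
    have hTq : T q = r q * Real.log (r q) + r q * Real.log (W (ρ q.2))
      - r q * Real.log (UW q.1 (ρ q.2)) - r q * Real.log (V q.2) := rfl
    rcases eq_or_ne (r q) 0 with h | h
    · rw [hTq, h]
      simp only [zero_mul, sub_zero, add_zero, zero_sub, zero_add]
      linarith [hyn q]
    · have h' : 0 < r q := lt_of_le_of_ne (h0 q) (Ne.symm h)
      have hVp : 0 < V q.2 := lt_of_lt_of_le h' (hrV q)
      have hWp : 0 < W (ρ q.2) := lt_of_lt_of_le hVp (hVW q.2)
      have hUWp : 0 < UW q.1 (ρ q.2) := lt_of_lt_of_le h' (hrUW q)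
      have hyp : 0 < y q := by
        have : y q = UW q.1 (ρ q.2) * (V q.2 / W (ρ q.2)) := rfl
        rw [this]
        exact mul_pos hUWp (div_pos hVp hWp)
      have hlogy : Real.log (y q) = Real.log (UW q.1 (ρ q.2)) + Real.log (V q.2)
          - Real.log (W (ρ q.2)) := by
        show Real.log (UW q.1 (ρ q.2) * (V q.2 / W (ρ q.2))) = _
        rw [Real.log_mul (ne_of_gt hUWp) (ne_of_gt (div_pos hVp hWp)),
          Real.log_div (ne_of_gt hVp) (ne_of_gt hWp)]
        ring
      have hkl := klterm_le (r q) (y q) (h0 q) (le_of_lt hyp) (fun _ => ne_of_gt hyp)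
      rw [hlogy] at hkl
      have hexp : r q * (Real.log (UW q.1 (ρ q.2)) + Real.log (V q.2) - Real.log (W (ρ q.2)))
          = r q * Real.log (UW q.1 (ρ q.2)) + r q * Real.log (V q.2)
            - r q * Real.log (W (ρ q.2)) := by ring
      rw [hexp] at hkl
      rw [hTq]
      linarith
  have hsumVe : ∑ b, V b = 1 := by
    rw [← h1, Fintype.sum_prod_type_right]
  have hsumy : ∑ q, y q = 1 := by
    rw [Fintype.sum_prod_type_right]
    have h' : ∀ b, (∑ a, y (a, b)) = V b := by
      intro b
      show ∑ a, UW a (ρ b) * (V b / W (ρ b)) = V b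
      rw [← Finset.sum_mul, hAUW]
      rcases eq_or_ne (W (ρ b)) 0 with h | h
      · have hVb : V b = 0 := le_antisymm (h ▸ hVW b) (hVn b)
        simp [h, hVb]
      · rw [mul_comm, div_mul_cancel₀ _ h]
    rw [Finset.sum_congr rfl fun b _ => h' b]
    exact hsumVe
  have hWlog : ∑ q : α × β, r q * Real.log (W (ρ q.2)) = ∑ c, W c * Real.log (W c) := by
    have step1 : ∑ q : α × β, r q * Real.log (W (ρ q.2))
        = ∑ b, V b * Real.log (W (ρ b)) := by
      rw [Fintype.sum_prod_type_right]
      refine Finset.sum_congr rfl fun b _ => ?_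
      show ∑ a, r (a, b) * Real.log (W (ρ b)) = V b * Real.log (W (ρ b))
      exact (Finset.sum_mul _ _ _).symm
    have step2 : ∀ b, V b * Real.log (W (ρ b))
        = ∑ c, if ρ b = c then V b * Real.log (W c) else 0 := by
      intro b
      rw [Finset.sum_ite_eq]
      simp
    rw [step1, Finset.sum_congr rfl fun b _ => step2 b, Finset.sum_comm]
    refine Finset.sum_congr rfl fun c _ => ?_
    have h3 : ∀ b, (if ρ b = c then V b * Real.log (W c) else 0)
        = (if ρ b = c then V b else 0) * Real.log (W c) := by
      intro b; split_ifs <;> simp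
    rw [Finset.sum_congr rfl fun b _ => h3 b, ← Finset.sum_mul]
  have hUWlog : ∑ q : α × β, r q * Real.log (UW q.1 (ρ q.2))
      = ∑ s : α × γ, UW s.1 s.2 * Real.log (UW s.1 s.2) := by
    rw [Fintype.sum_prod_type, Fintype.sum_prod_type]
    refine Finset.sum_congr rfl fun a _ => ?_
    have step2 : ∀ b, r (a, b) * Real.log (UW a (ρ b))
        = ∑ c, if ρ b = c then r (a, b) * Real.log (UW a c) else 0 := by
      intro b
      rw [Finset.sum_ite_eq]
      simp
    calc ∑ b, r (a, b) * Real.log (UW (a, b).1 (ρ (a, b).2))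
        = ∑ b, ∑ c, if ρ b = c then r (a, b) * Real.log (UW a c) else 0 :=
          Finset.sum_congr rfl fun b _ => step2 b
    _ = ∑ c, ∑ b, if ρ b = c then r (a, b) * Real.log (UW a c) else 0 := Finset.sum_comm
    _ = ∑ c, UW (a, c).1 (a, c).2 * Real.log (UW (a, c).1 (a, c).2) := by
        refine Finset.sum_congr rfl fun c _ => ?_
        have h3 : ∀ b, (if ρ b = c then r (a, b) * Real.log (UW a c) else 0)
            = (if ρ b = c then r (a, b) else 0) * Real.log (UW a c) := by
          intro b; split_ifs <;> simp
        rw [Finset.sum_congr rfl fun b _ => h3 b, ← Finset.sum_mul]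
  have hVlog : ∑ q : α × β, r q * Real.log (V q.2) = ∑ b, V b * Real.log (V b) := by
    rw [Fintype.sum_prod_type_right]
    refine Finset.sum_congr rfl fun b _ => ?_
    show ∑ a, r (a, b) * Real.log (V b) = V b * Real.log (V b)
    exact (Finset.sum_mul _ _ _).symm
  have hsumT : ∑ q, T q =
      ((∑ s : α × γ, Real.negMulLog (UW s.1 s.2)) + ∑ b, Real.negMulLog (V b))
      - ((∑ q, Real.negMulLog (r q)) + ∑ c, Real.negMulLog (W c)) := by
    rw [hT]
    simp only [Finset.sum_sub_distrib, Finset.sum_add_distrib]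
    rw [hWlog, hUWlog, hVlog]
    simp only [Real.negMulLog, neg_mul, Finset.sum_neg_distrib]
    ring
  have hTge : (0:ℝ) ≤ ∑ q, T q := by
    calc (0:ℝ) = ∑ q, (r q - y q) := by rw [Finset.sum_sub_distrib, h1, hsumy, sub_self]
    _ ≤ ∑ q, T q := Finset.sum_le_sum fun q _ => hTk q
  have hfin : (∑ q, Real.negMulLog (r q)) + ∑ c, Real.negMulLog (W c)
      ≤ (∑ s : α × γ, Real.negMulLog (UW s.1 s.2)) + ∑ b, Real.negMulLog (V b) := by
    linarith
  exact hfin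

section MeasureLevel

variable {Ω : Type*} [MeasurableSpace Ω]

noncomputable def pm (μ : Measure Ω) {α : Type*} (f : Ω → α) (a : α) : ℝ :=
  (μ (f ⁻¹' {a})).toReal

noncomputable def ent (μ : Measure Ω) {α : Type*} [Fintype α] (f : Ω → α) : ℝ :=
  ∑ a, Real.negMulLog (pm μ f a)

variable (μ : Measure Ω) [IsProbabilityMeasure μ]
variable {α β γ : Type*} [Fintype α] [Fintype β] [Fintype γ]
  [MeasurableSpace α] [MeasurableSingletonClass α]
  [MeasurableSpace β] [MeasurableSingletonClass β]
  [MeasurableSpace γ] [MeasurableSingletonClass γ]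
  [DecidableEq α] [DecidableEq β] [DecidableEq γ]

lemma pm_nonneg (f : Ω → α) (a : α) : 0 ≤ pm μ f a := ENNReal.toReal_nonneg

lemma pm_comp (f : Ω → α) (hf : Measurable f) (φ : α → β) (b : β) :
    pm μ (fun ω => φ (f ω)) b = ∑ a, if φ a = b then pm μ f a else 0 := by
  classical
  have hset : (fun ω => φ (f ω)) ⁻¹' {b}
      = ⋃ a ∈ (Finset.univ.filter (fun a => φ a = b)), f ⁻¹' {a} := by
    ext ω
    simp only [Set.mem_preimage, Set.mem_singleton_iff, Set.mem_iUnion, Finset.mem_filter,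
      Finset.mem_univ, true_and]
    constructor
    · intro h; exact ⟨f ω, h, rfl⟩
    · rintro ⟨a, h1, h2⟩; rw [← h1, h2]
  have hdisj : Set.PairwiseDisjoint
      ((Finset.univ.filter (fun a => φ a = b)) : Finset α) (fun a => f ⁻¹' {a}) := by
    intro a _ a' _ hne
    apply Set.disjoint_left.mpr
    intro ω h1 h2
    exact hne (by rw [← h1, ← h2])
  have hmeas : μ ((fun ω => φ (f ω)) ⁻¹' {b})
      = ∑ a ∈ (Finset.univ.filter (fun a => φ a = b)), μ (f ⁻¹' {a}) := by
    rw [hset]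
    exact measure_biUnion_finset hdisj fun a _ => hf (measurableSet_singleton a)
  rw [pm, hmeas, ENNReal.toReal_sum (fun a _ => measure_ne_top μ _), Finset.sum_filter]
  rfl

lemma sum_pm (f : Ω → α) (hf : Measurable f) : ∑ a, pm μ f a = 1 := by
  have h := pm_comp μ f hf (fun _ : α => (0 : Fin 1)) 0
  have h2 : pm μ (fun _ : Ω => (0 : Fin 1)) 0 = 1 := by
    rw [pm]
    have : ((fun _ : Ω => (0 : Fin 1)) ⁻¹' {0}) = Set.univ := by
      ext ω; simp
    rw [this, measure_univ]
    simp
  rw [h2] at h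
  simpa using h.symm

lemma pm_pair_fst (f : Ω → α) (g : Ω → β) (hf : Measurable f) (hg : Measurable g) (a : α) :
    pm μ f a = ∑ b, pm μ (fun ω => (f ω, g ω)) (a, b) := by
  have h := pm_comp μ (fun ω => (f ω, g ω)) (hf.prodMk hg) Prod.fst a
  rw [show (fun ω => Prod.fst ((fun ω' => (f ω', g ω')) ω)) = f from rfl] at h
  rw [h, Fintype.sum_prod_type]
  have h3 : ∀ a' : α, (∑ b, if ((a', b) : α × β).1 = a
        then pm μ (fun ω => (f ω, g ω)) (a', b) else 0)
      = if a' = a then ∑ b, pm μ (fun ω => (f ω, g ω)) (a', b) else 0 := by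
    intro a'
    show (∑ b, if a' = a then pm μ (fun ω => (f ω, g ω)) (a', b) else 0) = _
    exact sum_ite_pull _ _
  rw [Finset.sum_congr rfl fun a' _ => h3 a', Finset.sum_ite_eq' Finset.univ a]
  simp

lemma pm_pair_snd (f : Ω → α) (g : Ω → β) (hf : Measurable f) (hg : Measurable g) (b : β) :
    pm μ g b = ∑ a, pm μ (fun ω => (f ω, g ω)) (a, b) := by
  have h := pm_comp μ (fun ω => (f ω, g ω)) (hf.prodMk hg) Prod.snd b
  rw [show (fun ω => Prod.snd ((fun ω' => (f ω', g ω')) ω)) = g from rfl] at h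
  rw [h, Fintype.sum_prod_type_right]
  have h3 : ∀ b' : β, (∑ a, if ((a, b') : α × β).2 = b
        then pm μ (fun ω => (f ω, g ω)) (a, b') else 0)
      = if b' = b then ∑ a, pm μ (fun ω => (f ω, g ω)) (a, b') else 0 := by
    intro b'
    show (∑ a, if b' = b then pm μ (fun ω => (f ω, g ω)) (a, b') else 0) = _
    exact sum_ite_pull _ _
  rw [Finset.sum_congr rfl fun b' _ => h3 b', Finset.sum_ite_eq' Finset.univ b]
  simp

lemma ent_comp_inj (f : Ω → α) (e : α → β) (he : Function.Injective e) :
    ent μ (fun ω => e (f ω)) = ent μ f := by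
  classical
  have h1 : ∀ a, pm μ (fun ω => e (f ω)) (e a) = pm μ f a := by
    intro a
    have hseteq : (fun ω => e (f ω)) ⁻¹' {e a} = f ⁻¹' {a} := by
      ext ω; simp [he.eq_iff]
    rw [pm, pm, hseteq]
  have h2 : ∀ b, b ∉ Set.range e → pm μ (fun ω => e (f ω)) b = 0 := by
    intro b hb
    rw [pm]
    have : (fun ω => e (f ω)) ⁻¹' {b} = ∅ := by
      ext ω
      simp only [Set.mem_preimage, Set.mem_singleton_iff, Set.mem_empty_iff_false, iff_false]
      intro h
      exact hb ⟨f ω, h⟩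
    rw [this]
    simp
  rw [ent, ent]
  rw [← Finset.sum_subset (Finset.subset_univ (Finset.univ.image e))
    (fun b _ hb => by
      rw [h2 b (by simpa using hb)]
      exact Real.negMulLog_zero)]
  rw [Finset.sum_image (fun a _ a' _ h => he h)]
  exact Finset.sum_congr rfl fun a _ => by rw [h1]

lemma pm_comp_T (T : Ω → Ω) (hT : Measurable T) (hinv : μ.map T = μ)
    (f : Ω → α) (hf : Measurable f) (a : α) :
    pm μ (fun ω => f (T ω)) a = pm μ f a := by
  rw [pm, pm]
  congr 1
  have : (fun ω => f (T ω)) ⁻¹' {a} = T ⁻¹' (f ⁻¹' {a}) := rfl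
  rw [this, ← Measure.map_apply hT (hf (measurableSet_singleton a)), hinv]

lemma ent_comp_T (T : Ω → Ω) (hT : Measurable T) (hinv : μ.map T = μ)
    (f : Ω → α) (hf : Measurable f) :
    ent μ (fun ω => f (T ω)) = ent μ f :=
  Finset.sum_congr rfl fun a _ => by rw [pm_comp_T μ T hT hinv f hf]

lemma ent_sub_add (f : Ω → α) (g : Ω → β) (hf : Measurable f) (hg : Measurable g) :
    ent μ (fun ω => (f ω, g ω)) ≤ ent μ f + ent μ g := by
  obtain ⟨hle, _⟩ := gibbs (pm μ (fun ω => (f ω, g ω)))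
    (fun q => pm_nonneg μ _ q) (sum_pm μ _ (hf.prodMk hg))
  have e1 : ent μ f = ∑ a, Real.negMulLog (∑ b, pm μ (fun ω => (f ω, g ω)) (a, b)) :=
    Finset.sum_congr rfl fun a _ => by rw [pm_pair_fst μ f g hf hg]
  have e2 : ent μ g = ∑ b, Real.negMulLog (∑ a, pm μ (fun ω => (f ω, g ω)) (a, b)) :=
    Finset.sum_congr rfl fun b _ => by rw [pm_pair_snd μ f g hf hg]
  rw [ent, e1, e2]
  exact hle

lemma ent_mono_fst (f : Ω → α) (g : Ω → β) (hf : Measurable f) (hg : Measurable g) :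
    ent μ f ≤ ent μ (fun ω => (f ω, g ω)) := by
  have e1 : ent μ f = ∑ a, Real.negMulLog (∑ b, pm μ (fun ω => (f ω, g ω)) (a, b)) :=
    Finset.sum_congr rfl fun a _ => by rw [pm_pair_fst μ f g hf hg]
  rw [e1, ent, Fintype.sum_prod_type]
  exact Finset.sum_le_sum fun a _ =>
    negMulLog_sum_le _ (fun b => pm_nonneg μ _ _)

lemma ent_pair_eq_indep (f : Ω → α) (g : Ω → β) (hf : Measurable f) (hg : Measurable g)
    (heq : ent μ (fun ω => (f ω, g ω)) = ent μ f + ent μ g) (a : α) (b : β) :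
    μ (f ⁻¹' {a} ∩ g ⁻¹' {b}) = μ (f ⁻¹' {a}) * μ (g ⁻¹' {b}) := by
  obtain ⟨_, heqcase⟩ := gibbs (pm μ (fun ω => (f ω, g ω)))
    (fun q => pm_nonneg μ _ q) (sum_pm μ _ (hf.prodMk hg))
  have e1 : ent μ f = ∑ a, Real.negMulLog (∑ b, pm μ (fun ω => (f ω, g ω)) (a, b)) :=
    Finset.sum_congr rfl fun a _ => by rw [pm_pair_fst μ f g hf hg]
  have e2 : ent μ g = ∑ b, Real.negMulLog (∑ a, pm μ (fun ω => (f ω, g ω)) (a, b)) :=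
    Finset.sum_congr rfl fun b _ => by rw [pm_pair_snd μ f g hf hg]
  have hpm := heqcase (by rw [← e1, ← e2]; exact heq) (a, b)
  rw [← pm_pair_fst μ f g hf hg a, ← pm_pair_snd μ f g hf hg b] at hpm
  have hset : (fun ω => (f ω, g ω)) ⁻¹' {(a, b)} = f ⁻¹' {a} ∩ g ⁻¹' {b} := by
    ext ω
    simp [Prod.ext_iff]
  rw [pm, hset, pm, pm] at hpm
  have h3 : (μ (f ⁻¹' {a} ∩ g ⁻¹' {b})).toReal
      = ((μ (f ⁻¹' {a})) * (μ (g ⁻¹' {b}))).toReal := by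
    rw [ENNReal.toReal_mul]
    exact hpm
  exact (ENNReal.toReal_eq_toReal_iff' (measure_ne_top _ _)
    (ENNReal.mul_ne_top (measure_ne_top _ _) (measure_ne_top _ _))).mp h3

lemma ent_ssa (f : Ω → α) (g : Ω → β) (hf : Measurable f) (hg : Measurable g) (ρ : β → γ) :
    ent μ (fun ω => (f ω, g ω)) + ent μ (fun ω => ρ (g ω))
    ≤ ent μ (fun ω => (f ω, ρ (g ω))) + ent μ g := by
  classical
  set r : α × β → ℝ := pm μ (fun ω => (f ω, g ω)) with hr
  have hssa := ssa r (fun q => pm_nonneg μ _ q) (sum_pm μ _ (hf.prodMk hg)) ρ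
  have eV : ∀ b, pm μ g b = ∑ a, r (a, b) := fun b => pm_pair_snd μ f g hf hg b
  have eW : ∀ c, pm μ (fun ω => ρ (g ω)) c = ∑ b, if ρ b = c then (∑ a, r (a, b)) else 0 := by
    intro c
    rw [pm_comp μ g hg ρ c]
    exact Finset.sum_congr rfl fun b _ => by rw [eV b]
  have eUW : ∀ s : α × γ, pm μ (fun ω => (f ω, ρ (g ω))) s
      = ∑ b, if ρ b = s.2 then r (s.1, b) else 0 := by
    intro s
    have h := pm_comp μ (fun ω => (f ω, g ω)) (hf.prodMk hg)
      (fun q : α × β => (q.1, ρ q.2)) s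
    rw [show (fun ω => ((fun q : α × β => (q.1, ρ q.2)) ((fun ω' => (f ω', g ω')) ω)))
      = (fun ω => (f ω, ρ (g ω))) from rfl] at h
    rw [h, Fintype.sum_prod_type]
    have h3 : ∀ a' : α, (∑ b, if ((fun q : α × β => (q.1, ρ q.2)) (a', b)) = s
          then r (a', b) else 0)
        = if a' = s.1 then (∑ b, if ρ b = s.2 then r (a', b) else 0) else 0 := by
      intro a'
      have h4 : ∀ b, (if ((a', ρ b) : α × γ) = s then r (a', b) else 0)
          = if a' = s.1 then (if ρ b = s.2 then r (a', b) else 0) else 0 := by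
        intro b
        by_cases h5 : a' = s.1 <;> by_cases h6 : ρ b = s.2 <;>
          simp [Prod.ext_iff, h5, h6]
      rw [Finset.sum_congr rfl fun b _ => h4 b, sum_ite_pull]
    rw [Finset.sum_congr rfl fun a' _ => h3 a', Finset.sum_ite_eq' Finset.univ s.1]
    simp
  have g1 : ent μ (fun ω => ρ (g ω))
      = ∑ c, Real.negMulLog (∑ b, if ρ b = c then (∑ a, r (a, b)) else 0) :=
    Finset.sum_congr rfl fun c _ => by rw [eW c]
  have g2 : ent μ (fun ω => (f ω, ρ (g ω)))
      = ∑ s : α × γ, Real.negMulLog (∑ b, if ρ b = s.2 then r (s.1, b) else 0) :=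
    Finset.sum_congr rfl fun s _ => by rw [eUW s]
  have g3 : ent μ g = ∑ b, Real.negMulLog (∑ a, r (a, b)) :=
    Finset.sum_congr rfl fun b _ => by rw [eV b]
  rw [g1, g2, g3]
  exact hssa

end MeasureLevel

abbrev Om1 := (ℕ → Bool) × (ℕ → Bool)
abbrev OmJ := Om1 × (ℕ → Bool)

def shiftJ : OmJ → OmJ := Prod.map pairShift binShift

def X1 (m : ℕ) : Om1 → (Fin m → Bool × Bool) := fun q i => (q.1 (i : ℕ), q.2 (i : ℕ))
def E1 (k : ℕ) : (ℕ → Bool) → (Fin k → Bool) := fun ε i => ε (i : ℕ)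
def Xv (m : ℕ) : OmJ → (Fin m → Bool × Bool) := fun ω => X1 m ω.1
def Ev (k : ℕ) : OmJ → (Fin k → Bool) := fun ω => E1 k ω.2
def epsv (k : ℕ) : OmJ → Bool := fun ω => ω.2 k

lemma measurable_binShift : Measurable binShift :=
  measurable_pi_lambda _ fun i => measurable_pi_apply (i + 1)

lemma measurable_pairShift : Measurable pairShift :=
  (measurable_binShift.comp measurable_fst).prodMk (measurable_binShift.comp measurable_snd)

lemma measurable_shiftJ : Measurable shiftJ :=
  (measurable_pairShift.comp measurable_fst).prodMk (measurable_binShift.comp measurable_snd)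

lemma measurable_X1 (m : ℕ) : Measurable (X1 m) :=
  measurable_pi_lambda _ fun i =>
    ((measurable_pi_apply (i : ℕ)).comp measurable_fst).prodMk
      ((measurable_pi_apply (i : ℕ)).comp measurable_snd)

lemma measurable_E1 (k : ℕ) : Measurable (E1 k) :=
  measurable_pi_lambda _ fun i => measurable_pi_apply (i : ℕ)

lemma measurable_Xv (m : ℕ) : Measurable (Xv m) := (measurable_X1 m).comp measurable_fst
lemma measurable_Ev (k : ℕ) : Measurable (Ev k) := (measurable_E1 k).comp measurable_snd
lemma measurable_epsv (k : ℕ) : Measurable (epsv k) :=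
  (measurable_pi_apply k).comp measurable_snd

lemma binShift_iter (t : ℕ) (a : ℕ → Bool) : binShift^[t] a = fun i => a (i + t) := by
  induction t with
  | zero => simp
  | succ t ih =>
    rw [Function.iterate_succ_apply', ih]
    funext i
    show a (i + 1 + t) = a (i + (t + 1))
    congr 1
    omega

lemma pairShift_iter (t : ℕ) (q : Om1) :
    pairShift^[t] q = (binShift^[t] q.1, binShift^[t] q.2) := by
  induction t with
  | zero => rfl
  | succ t ih =>
    rw [Function.iterate_succ_apply', ih, Function.iterate_succ_apply',
      Function.iterate_succ_apply']
    rfl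

lemma shiftJ_iter (t : ℕ) (ω : OmJ) :
    shiftJ^[t] ω = (pairShift^[t] ω.1, binShift^[t] ω.2) := by
  induction t with
  | zero => rfl
  | succ t ih =>
    rw [Function.iterate_succ_apply', ih, Function.iterate_succ_apply',
      Function.iterate_succ_apply']
    rfl

lemma epsv_shift (k t : ℕ) (ω : OmJ) : epsv k (shiftJ^[t] ω) = ω.2 (k + t) := by
  rw [epsv, shiftJ_iter, binShift_iter]

lemma Ev_shift (k t : ℕ) (ω : OmJ) :
    Ev k (shiftJ^[t] ω) = fun i : Fin k => ω.2 ((i : ℕ) + t) := by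
  rw [Ev, shiftJ_iter]
  funext i
  show (binShift^[t] ω.2) (i : ℕ) = _
  rw [binShift_iter]

lemma Xv_shift (m t : ℕ) (ω : OmJ) :
    Xv m (shiftJ^[t] ω) = fun i : Fin m => (ω.1.1 ((i : ℕ) + t), ω.1.2 ((i : ℕ) + t)) := by
  simp only [Xv, shiftJ_iter, pairShift_iter, binShift_iter]
  funext i
  rfl

lemma map_shiftJ_iter (lam : Measure OmJ) (hlaminv : lam.map shiftJ = lam) (t : ℕ) :
    lam.map (shiftJ^[t]) = lam := by
  induction t with
  | zero => simpa using Measure.map_id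
  | succ t ih =>
    rw [Function.iterate_succ,
      ← Measure.map_map (measurable_shiftJ.iterate t) measurable_shiftJ, hlaminv, ih]

lemma bernoulliBool_apply (p : ℝ) (v : Bool) :
    bernoulliBool p {v} = ENNReal.ofReal (if v then p else 1 - p) := by
  cases v <;>
    simp [bernoulliBool, Measure.dirac_apply' _ (measurableSet_singleton _)]

lemma cyl_eq (k : ℕ) (e : Fin k → Bool) :
    {ε : ℕ → Bool | ∀ i : Fin k, ε (i : ℕ) = e i} = E1 k ⁻¹' {e} := by
  ext ε
  simp [E1, funext_iff]

lemma eta_cyl (p : ℝ) (η : Measure (ℕ → Bool)) [IsProbabilityMeasure η]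
    (hiid : iIndepFun
        (fun (i : ℕ) (ε : ℕ → Bool) => ε i) η)
    (hmarg : ∀ i : ℕ, η.map (fun ε : ℕ → Bool => ε i) = bernoulliBool p)
    (k : ℕ) (e : Fin k → Bool) :
    η (E1 k ⁻¹' {e}) = ∏ i : Fin k, ENNReal.ofReal (if e i then p else 1 - p) := by
  classical
  set sets : ℕ → Set Bool := fun i => if h : i < k then {e ⟨i, h⟩} else Set.univ with hsets
  have hset : E1 k ⁻¹' {e} = ⋂ i ∈ Finset.range k, (fun ε : ℕ → Bool => ε i) ⁻¹' sets i := by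
    rw [← cyl_eq]
    ext ε
    simp only [Set.mem_setOf_eq, Set.mem_iInter, Set.mem_preimage, Finset.mem_range]
    constructor
    · intro h i hi
      rw [hsets]
      simp only [hi, dif_pos]
      exact h ⟨i, hi⟩
    · intro h i
      have := h (i : ℕ) i.isLt
      rw [hsets] at this
      simp only [i.isLt, dif_pos] at this
      simpa using this
  have hmeas : ∀ i, i ∈ Finset.range k → MeasurableSet (sets i) := by
    intro i _
    show MeasurableSet (if h : i < k then ({e ⟨i, h⟩} : Set Bool) else Set.univ)
    split_ifs
    · exact measurableSet_singleton _
    · exact MeasurableSet.univ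
  have hprod := hiid.measure_inter_preimage_eq_mul (Finset.range k) hmeas
  rw [hset, hprod]
  have hterm : ∀ i ∈ Finset.range k,
      η ((fun ε : ℕ → Bool => ε i) ⁻¹' sets i)
        = (if h : i < k then ENNReal.ofReal (if e ⟨i, h⟩ then p else 1 - p) else 1) := by
    intro i hi
    rw [Finset.mem_range] at hi
    rw [hsets]
    simp only [hi, dif_pos]
    rw [← Measure.map_apply (measurable_pi_apply i) (measurableSet_singleton _), hmarg i,
      bernoulliBool_apply]
  rw [Finset.prod_congr rfl hterm]
  rw [← Fin.prod_univ_eq_prod_range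
    (fun i => if h : i < k then ENNReal.ofReal (if e ⟨i, h⟩ then p else 1 - p) else 1) k]
  refine Finset.prod_congr rfl fun i _ => ?_
  simp [i.isLt]

lemma sum_prod_pmf (p : ℝ) (n : ℕ) :
    ∑ w : Fin n → Bool, ∏ i, (if w i then p else 1 - p) = 1 := by
  induction n with
  | zero => simp
  | succ n ih =>
    rw [← (Fin.consEquiv (fun _ : Fin (n+1) => Bool)).sum_comp
      (fun w : Fin (n+1) → Bool => ∏ i, (if w i then p else 1 - p)), Fintype.sum_prod_type]
    have key : ∀ (b : Bool) (w : Fin n → Bool),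
        (∏ i : Fin (n+1), (if (Fin.consEquiv (fun _ : Fin (n+1) => Bool)) (b, w) i then p else 1 - p))
        = (if b then p else 1 - p) * ∏ i, (if w i then p else 1 - p) := by
      intro b w
      rw [Fin.prod_univ_succ]
      simp [Fin.consEquiv]
    rw [Finset.sum_congr rfl fun b _ => Finset.sum_congr rfl fun w _ => key b w]
    have h1 : ∀ b : Bool, ∑ w : Fin n → Bool,
        (if b then p else 1 - p) * ∏ i, (if w i then p else 1 - p)
        = (if b then p else 1 - p) := by
      intro b
      rw [← Finset.mul_sum, ih, mul_one]
    rw [Finset.sum_congr rfl fun b _ => h1 b, Fintype.sum_bool]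
    norm_num

lemma ent_prod_pmf (p : ℝ) (n : ℕ) :
    ∑ e : Fin n → Bool, Real.negMulLog (∏ i, (if e i then p else 1 - p))
      = n * (Real.negMulLog p + Real.negMulLog (1 - p)) := by
  induction n with
  | zero => simp
  | succ n ih =>
    rw [← (Fin.consEquiv (fun _ : Fin (n+1) => Bool)).sum_comp
      (fun w : Fin (n+1) → Bool => Real.negMulLog (∏ i, (if w i then p else 1 - p))),
      Fintype.sum_prod_type]
    have key : ∀ (b : Bool) (w : Fin n → Bool),
        Real.negMulLog (∏ i : Fin (n+1),
          (if (Fin.consEquiv (fun _ : Fin (n+1) => Bool)) (b, w) i then p else 1 - p))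
        = (∏ i, (if w i then p else 1 - p)) * Real.negMulLog (if b then p else 1 - p)
          + (if b then p else 1 - p) * Real.negMulLog (∏ i, (if w i then p else 1 - p)) := by
      intro b w
      have hprd : (∏ i : Fin (n+1),
          (if (Fin.consEquiv (fun _ : Fin (n+1) => Bool)) (b, w) i then p else 1 - p))
          = (if b then p else 1 - p) * ∏ i, (if w i then p else 1 - p) := by
        rw [Fin.prod_univ_succ]
        simp [Fin.consEquiv]
      rw [hprd, Real.negMulLog_mul]
    rw [Finset.sum_congr rfl fun b _ => Finset.sum_congr rfl fun w _ => key b w]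
    simp only [Finset.sum_add_distrib]
    have h1 : ∀ b : Bool, ∑ w : Fin n → Bool,
        (∏ i, (if w i then p else 1 - p)) * Real.negMulLog (if b then p else 1 - p)
        = Real.negMulLog (if b then p else 1 - p) := by
      intro b
      rw [← Finset.sum_mul, sum_prod_pmf, one_mul]
    have h2 : ∀ b : Bool, ∑ w : Fin n → Bool,
        (if b then p else 1 - p) * Real.negMulLog (∏ i, (if w i then p else 1 - p))
        = (if b then p else 1 - p) * (n * (Real.negMulLog p + Real.negMulLog (1 - p))) := by
      intro b
      rw [← Finset.mul_sum, ih]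
    rw [Finset.sum_congr rfl fun b _ => h1 b, Finset.sum_congr rfl fun b _ => h2 b,
      Fintype.sum_bool, Fintype.sum_bool]
    norm_num
    ring

lemma tendsto_aux (a : ℕ → ℝ) (h : Tendsto (fun n : ℕ => a n / n) atTop (𝓝 0)) (K : ℕ) (δ : ℝ)
    (hineq : ∀ n : ℕ, K + 1 ≤ n → ((n : ℝ) - K) * δ ≤ a n) : δ ≤ 0 := by
  have h1 : Tendsto (fun n : ℕ => (1 - (K : ℝ) / n) * δ) atTop (𝓝 δ) := by
    have h0 : Tendsto (fun n : ℕ => (K : ℝ) / n) atTop (𝓝 0) :=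
      tendsto_const_div_atTop_nhds_zero_nat (K : ℝ)
    have h2 : Tendsto (fun n : ℕ => 1 - (K : ℝ) / n) atTop (𝓝 1) := by
      simpa using (tendsto_const_nhds (x := (1:ℝ))).sub h0
    simpa using h2.mul_const δ
  have hlim : Tendsto (fun n : ℕ => (((n : ℝ) - K) * δ) / n) atTop (𝓝 δ) := by
    apply h1.congr'
    filter_upwards [eventually_ge_atTop 1] with n hn
    have hn' : (n : ℝ) ≠ 0 := by positivity
    field_simp
  have hev : ∀ᶠ n : ℕ in atTop, (((n : ℝ) - K) * δ) / n ≤ a n / n := by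
    filter_upwards [eventually_ge_atTop (K + 1)] with n hn
    have hn' : (0 : ℝ) < n := by
      have : (1 : ℕ) ≤ n := le_trans (by omega) hn
      exact_mod_cast lt_of_lt_of_le zero_lt_one (by exact_mod_cast this)
    exact (div_le_div_iff_of_pos_right hn').mpr (hineq n hn)
  simpa using le_of_tendsto_of_tendsto hlim h hev

def EXv (k m : ℕ) : OmJ → (Fin k → Bool) × (Fin m → Bool × Bool) :=
  fun ω => (Ev k ω, Xv m ω)

def Gv (k m : ℕ) : OmJ → Bool × ((Fin k → Bool) × (Fin m → Bool × Bool)) :=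
  fun ω => (epsv k ω, EXv k m ω)

lemma measurable_EXv (k m : ℕ) : Measurable (EXv k m) :=
  (measurable_Ev k).prodMk (measurable_Xv m)

lemma measurable_Gv (k m : ℕ) : Measurable (Gv k m) :=
  (measurable_epsv k).prodMk (measurable_EXv k m)

lemma lam_Ev (p : ℝ) (lam : Measure OmJ) (η : Measure (ℕ → Bool)) [IsProbabilityMeasure η]
    (hiid : iIndepFun
        (fun (i : ℕ) (ε : ℕ → Bool) => ε i) η)
    (hmarg : ∀ i : ℕ, η.map (fun ε : ℕ → Bool => ε i) = bernoulliBool p)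
    (hsnd : lam.map Prod.snd = η) (k : ℕ) (e : Fin k → Bool) :
    lam (Ev k ⁻¹' {e}) = ∏ i, ENNReal.ofReal (if e i then p else 1 - p) := by
  have h1 : lam (Ev k ⁻¹' {e}) = η (E1 k ⁻¹' {e}) := by
    rw [← hsnd, Measure.map_apply measurable_snd ((measurable_E1 k) (measurableSet_singleton e))]
    rfl
  rw [h1, eta_cyl p η hiid hmarg k e]

lemma lam_eps (p : ℝ) (lam : Measure OmJ) (η : Measure (ℕ → Bool))
    (hmarg : ∀ i : ℕ, η.map (fun ε : ℕ → Bool => ε i) = bernoulliBool p)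
    (hsnd : lam.map Prod.snd = η) (j : ℕ) (v : Bool) :
    lam (epsv j ⁻¹' {v}) = ENNReal.ofReal (if v then p else 1 - p) := by
  have h1 : lam (epsv j ⁻¹' {v}) = η ((fun ε : ℕ → Bool => ε j) ⁻¹' {v}) := by
    rw [← hsnd, Measure.map_apply measurable_snd
      ((measurable_pi_apply j) (measurableSet_singleton v))]
    rfl
  rw [h1, ← Measure.map_apply (measurable_pi_apply j) (measurableSet_singleton v), hmarg j,
    bernoulliBool_apply]

lemma pm_Ev (p : ℝ) (hp0 : 0 ≤ p) (hp1 : p ≤ 1) (lam : Measure OmJ)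
    (hlamEv : ∀ (k : ℕ) (e : Fin k → Bool),
      lam (Ev k ⁻¹' {e}) = ∏ i, ENNReal.ofReal (if e i then p else 1 - p))
    (k : ℕ) (e : Fin k → Bool) :
    pm lam (Ev k) e = ∏ i, (if e i then p else 1 - p) := by
  rw [pm, hlamEv k e, ENNReal.toReal_prod]
  refine Finset.prod_congr rfl fun i _ => ?_
  rw [ENNReal.toReal_ofReal]
  split_ifs <;> linarith

lemma ent_Ev (p : ℝ) (hp0 : 0 ≤ p) (hp1 : p ≤ 1) (lam : Measure OmJ)
    (hlamEv : ∀ (k : ℕ) (e : Fin k → Bool),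
      lam (Ev k ⁻¹' {e}) = ∏ i, ENNReal.ofReal (if e i then p else 1 - p))
    (n : ℕ) :
    ent lam (Ev n) = n * (Real.negMulLog p + Real.negMulLog (1 - p)) := by
  rw [ent, Finset.sum_congr rfl fun e _ => by rw [pm_Ev p hp0 hp1 lam hlamEv n e]]
  exact ent_prod_pmf p n

lemma ent_eps (p : ℝ) (hp0 : 0 ≤ p) (hp1 : p ≤ 1) (lam : Measure OmJ)
    (hlameps : ∀ (j : ℕ) (v : Bool),
      lam (epsv j ⁻¹' {v}) = ENNReal.ofReal (if v then p else 1 - p))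
    (j : ℕ) :
    ent lam (epsv j) = Real.negMulLog p + Real.negMulLog (1 - p) := by
  have hpm : ∀ v : Bool, pm lam (epsv j) v = if v then p else 1 - p := by
    intro v
    rw [pm, hlameps j v, ENNReal.toReal_ofReal]
    split_ifs <;> linarith
  rw [ent, Fintype.sum_bool, hpm, hpm]
  norm_num

lemma ent_Xv_eq_block (lam : Measure OmJ) (lam₃ : Measure Om1)
    (hfst : lam.map Prod.fst = lam₃) (n : ℕ) :
    ent lam (Xv n) =
      ∑ w : Fin n → Bool × Bool,
        Real.negMulLog ((lam₃ {q : Om1 | ∀ i : Fin n, (q.1 (i : ℕ), q.2 (i : ℕ)) = w i}).toReal) := by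
  refine Finset.sum_congr rfl fun w _ => ?_
  have hset : {q : Om1 | ∀ i : Fin n, (q.1 (i : ℕ), q.2 (i : ℕ)) = w i} = X1 n ⁻¹' {w} := by
    ext q
    simp [X1, funext_iff]
  have h1 : lam₃ {q : Om1 | ∀ i : Fin n, (q.1 (i : ℕ), q.2 (i : ℕ)) = w i} = lam (Xv n ⁻¹' {w}) := by
    rw [hset, ← hfst, Measure.map_apply measurable_fst
      ((measurable_X1 n) (measurableSet_singleton w))]
    rfl
  rw [pm, h1]

lemma u_zero (lam : Measure OmJ) [IsProbabilityMeasure lam] (n : ℕ) :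
    ent lam (EXv 0 n) = ent lam (Xv n) := by
  haveI : Subsingleton (Fin 0 → Bool) := ⟨fun a b => funext fun i => i.elim0⟩
  have hinj : Function.Injective
      (fun x : Fin n → Bool × Bool => ((fun i : Fin 0 => (i.elim0 : Bool)), x)) := by
    intro a b h
    exact congrArg Prod.snd h
  have h := ent_comp_inj lam (Xv n) _ hinj
  have e : (fun ω => ((fun i : Fin 0 => (i.elim0 : Bool)), Xv n ω)) = EXv 0 n := by
    funext ω
    exact Prod.ext_iff.mpr ⟨Subsingleton.elim _ _, rfl⟩
  rw [← e]
  exact h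

lemma u_succ (lam : Measure OmJ) [IsProbabilityMeasure lam] (j n : ℕ) :
    ent lam (Gv j n) = ent lam (EXv (j+1) n) := by
  have hinj : Function.Injective
      (fun s : (Fin (j+1) → Bool) × (Fin n → Bool × Bool) =>
        (s.1 (Fin.last j), ((fun i : Fin j => s.1 i.castSucc), s.2))) := by
    rintro ⟨e1, x1⟩ ⟨e2, x2⟩ h
    simp only [Prod.mk.injEq] at h
    obtain ⟨h1, h2, h3⟩ := h
    refine Prod.ext_iff.mpr ⟨?_, h3⟩
    funext i
    refine Fin.lastCases ?_ ?_ i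
    · exact h1
    · intro i'
      exact congrFun h2 i'
  have h := ent_comp_inj lam (EXv (j+1) n) _ hinj
  have e : (fun ω => (EXv (j+1) n ω |>.1 (Fin.last j),
      ((fun i : Fin j => (EXv (j+1) n ω).1 i.castSucc), (EXv (j+1) n ω).2))) = Gv j n := rfl
  rw [← e]
  exact h

lemma delta_le_Hp (p : ℝ) (lam : Measure OmJ) [IsProbabilityMeasure lam]
    (henteps : ∀ j : ℕ, ent lam (epsv j) = Real.negMulLog p + Real.negMulLog (1 - p))
    (j n : ℕ) :
    ent lam (Gv j n) - ent lam (EXv j n)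
      ≤ Real.negMulLog p + Real.negMulLog (1 - p) := by
  have h := ent_sub_add lam (epsv j) (EXv j n) (measurable_epsv j) (measurable_EXv j n)
  have e : (fun ω => (epsv j ω, EXv j n ω)) = Gv j n := rfl
  rw [e, henteps j] at h
  linarith

lemma delta_le_d (lam : Measure OmJ) [IsProbabilityMeasure lam]
    (hshift : lam.map shiftJ = lam) (k m j n : ℕ) (hkj : k ≤ j) (hjmn : j + m ≤ n + k) :
    ent lam (Gv j n) - ent lam (EXv j n)
      ≤ ent lam (Gv k m) - ent lam (EXv k m) := by
  have hssa := ent_ssa lam (epsv j) (EXv j n) (measurable_epsv j) (measurable_EXv j n)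
    (fun s : (Fin j → Bool) × (Fin n → Bool × Bool) =>
      ((fun i : Fin k => s.1 ⟨(i : ℕ) + (j - k), by have := i.isLt; omega⟩),
       (fun i : Fin m => s.2 ⟨(i : ℕ) + (j - k), by have := i.isLt; omega⟩)))
  have e0 : (fun ω => (epsv j ω, EXv j n ω)) = Gv j n := rfl
  rw [e0] at hssa
  have hρg : (fun ω =>
      (((fun i : Fin k => (EXv j n ω).1 ⟨(i : ℕ) + (j - k), by have := i.isLt; omega⟩),
        (fun i : Fin m => (EXv j n ω).2 ⟨(i : ℕ) + (j - k), by have := i.isLt; omega⟩))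
        : (Fin k → Bool) × (Fin m → Bool × Bool)))
      = (fun ω => EXv k m (shiftJ^[j - k] ω)) := by
    funext ω
    have h1 : EXv k m (shiftJ^[j - k] ω)
        = ((fun i : Fin k => ω.2 ((i : ℕ) + (j - k))),
           (fun i : Fin m => (ω.1.1 ((i : ℕ) + (j - k)), ω.1.2 ((i : ℕ) + (j - k))))) := by
      unfold EXv
      rw [Ev_shift, Xv_shift]
    rw [h1]
    rfl
  have hfull : (fun ω => (epsv j ω,
      (((fun i : Fin k => (EXv j n ω).1 ⟨(i : ℕ) + (j - k), by have := i.isLt; omega⟩),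
        (fun i : Fin m => (EXv j n ω).2 ⟨(i : ℕ) + (j - k), by have := i.isLt; omega⟩))
        : (Fin k → Bool) × (Fin m → Bool × Bool))))
      = (fun ω => Gv k m (shiftJ^[j - k] ω)) := by
    funext ω
    have h1 : Gv k m (shiftJ^[j - k] ω)
        = (ω.2 (k + (j - k)),
           ((fun i : Fin k => ω.2 ((i : ℕ) + (j - k))),
            (fun i : Fin m => (ω.1.1 ((i : ℕ) + (j - k)), ω.1.2 ((i : ℕ) + (j - k)))))) := by
      unfold Gv EXv
      rw [epsv_shift, Ev_shift, Xv_shift]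
    rw [h1]
    have hkt : k + (j - k) = j := by omega
    rw [hkt]
    rfl
  rw [hρg, hfull] at hssa
  have hinv1 : ent lam (fun ω => EXv k m (shiftJ^[j - k] ω)) = ent lam (EXv k m) :=
    ent_comp_T lam _ (measurable_shiftJ.iterate (j - k))
      (map_shiftJ_iter lam hshift (j - k)) _ (measurable_EXv k m)
  have hinv2 : ent lam (fun ω => Gv k m (shiftJ^[j - k] ω)) = ent lam (Gv k m) :=
    ent_comp_T lam _ (measurable_shiftJ.iterate (j - k))
      (map_shiftJ_iter lam hshift (j - k)) _ (measurable_Gv k m)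
  rw [hinv1, hinv2] at hssa
  linarith

lemma card_valid (k m n : ℕ) :
    (n : ℝ) - ((k : ℝ) + (m : ℝ))
      ≤ (((Finset.range n).filter (fun j => k ≤ j ∧ j + m ≤ n + k)).card : ℝ) := by
  classical
  have hsub : Finset.Ico (min k n) (min (n + k + 1 - m) n)
      ⊆ (Finset.range n).filter (fun j => k ≤ j ∧ j + m ≤ n + k) := by
    intro j hj
    rw [Finset.mem_Ico] at hj
    rw [Finset.mem_filter, Finset.mem_range]
    omega
  have hcard := Finset.card_le_card hsub
  rw [Nat.card_Ico] at hcard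
  have hnat : n - (k + m) ≤ ((Finset.range n).filter (fun j => k ≤ j ∧ j + m ≤ n + k)).card := by
    omega
  calc (n : ℝ) - ((k : ℝ) + (m : ℝ)) ≤ ((n - (k + m) : ℕ) : ℝ) := by
        rcases le_total (k + m) n with h | h
        · rw [Nat.cast_sub h]
          push_cast
          linarith
        · have h1 : ((n - (k + m) : ℕ) : ℝ) ≥ 0 := Nat.cast_nonneg _
          have h2 : (n : ℝ) ≤ (k : ℝ) + (m : ℝ) := by exact_mod_cast h
          linarith
  _ ≤ _ := Nat.cast_le.mpr hnat

lemma key_ineq (p : ℝ) (lam : Measure OmJ) [IsProbabilityMeasure lam]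
    (hshift : lam.map shiftJ = lam)
    (hentEv : ∀ n : ℕ, ent lam (Ev n) = n * (Real.negMulLog p + Real.negMulLog (1 - p)))
    (henteps : ∀ j : ℕ, ent lam (epsv j) = Real.negMulLog p + Real.negMulLog (1 - p))
    (k m n : ℕ) :
    ((((Finset.range n).filter (fun j => k ≤ j ∧ j + m ≤ n + k)).card : ℝ))
        * ((Real.negMulLog p + Real.negMulLog (1 - p))
            - (ent lam (Gv k m) - ent lam (EXv k m)))
      ≤ ent lam (Xv n) := by
  classical
  set Hp := Real.negMulLog p + Real.negMulLog (1 - p) with hHp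
  set d := ent lam (Gv k m) - ent lam (EXv k m) with hd
  set u : ℕ → ℝ := fun j => ent lam (EXv j n) with hu
  set P : ℕ → Prop := fun j => k ≤ j ∧ j + m ≤ n + k with hP
  have htel : u n - u 0 = ∑ j ∈ Finset.range n, (u (j+1) - u j) :=
    (Finset.sum_range_sub u n).symm
  have hu0 : u 0 = ent lam (Xv n) := u_zero lam n
  have hmono : (n : ℝ) * Hp ≤ u n := by
    rw [← hentEv n]
    exact ent_mono_fst lam (Ev n) (Xv n) (measurable_Ev n) (measurable_Xv n)
  have hterm : ∀ j ∈ Finset.range n, u (j+1) - u j ≤ if P j then d else Hp := by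
    intro j _
    have hj1 : u (j+1) = ent lam (Gv j n) := (u_succ lam j n).symm
    rw [hj1]
    split_ifs with hcond
    · exact delta_le_d lam hshift k m j n hcond.1 hcond.2
    · exact delta_le_Hp p lam henteps j n
  set Vc := ((Finset.range n).filter P).card with hVc
  have hVle : Vc ≤ n := by
    rw [hVc]
    exact le_trans (Finset.card_filter_le _ _) (le_of_eq (Finset.card_range n))
  have hsum : ∑ j ∈ Finset.range n, (u (j+1) - u j)
      ≤ (Vc : ℝ) * d + ((n : ℝ) - Vc) * Hp := by
    calc ∑ j ∈ Finset.range n, (u (j+1) - u j)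
        ≤ ∑ j ∈ Finset.range n, (if P j then d else Hp) := Finset.sum_le_sum hterm
    _ = ∑ _j ∈ (Finset.range n).filter P, d
        + ∑ _j ∈ (Finset.range n).filter (fun j => ¬ P j), Hp := Finset.sum_ite _ _
    _ = (Vc : ℝ) * d + (((Finset.range n).filter (fun j => ¬ P j)).card : ℝ) * Hp := by
        rw [Finset.sum_const, Finset.sum_const]
        simp [nsmul_eq_mul]
        left; convert hVc.symm
    _ = (Vc : ℝ) * d + ((n : ℝ) - Vc) * Hp := by
        have hc := Finset.card_filter_add_card_filter_not
          (s := Finset.range n) (p := P)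
        rw [Finset.card_range] at hc
        have : (((Finset.range n).filter (fun j => ¬ P j)).card : ℝ) = (n : ℝ) - Vc := by
          have h2 : ((Finset.range n).filter (fun j => ¬ P j)).card = n - Vc := by omega
          rw [h2, Nat.cast_sub hVle]
        rw [this]
  have hfinal : (n : ℝ) * Hp ≤ ent lam (Xv n) + (Vc : ℝ) * d + ((n : ℝ) - Vc) * Hp := by
    have := htel
    nlinarith [hmono, hsum, htel, hu0]
  have hgoal : (Vc : ℝ) * (Hp - d) ≤ ent lam (Xv n) := by nlinarith [hfinal]
  exact hgoal

lemma indep_of_ent (p : ℝ) (lam : Measure OmJ) [IsProbabilityMeasure lam]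
    (k m : ℕ)
    (heq : ent lam (Gv k m) = ent lam (epsv k) + ent lam (EXv k m))
    (v : Bool) (s : (Fin k → Bool) × (Fin m → Bool × Bool)) :
    lam (epsv k ⁻¹' {v} ∩ EXv k m ⁻¹' {s})
      = lam (epsv k ⁻¹' {v}) * lam (EXv k m ⁻¹' {s}) := by
  have heq' : ent lam (fun ω => (epsv k ω, EXv k m ω))
      = ent lam (epsv k) + ent lam (EXv k m) := heq
  exact ent_pair_eq_indep lam (epsv k) (EXv k m) (measurable_epsv k) (measurable_EXv k m)
    heq' v s

lemma prodF (p : ℝ) (lam : Measure OmJ) [IsProbabilityMeasure lam]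
    (hlamEv : ∀ (k : ℕ) (e : Fin k → Bool),
      lam (Ev k ⁻¹' {e}) = ∏ i, ENNReal.ofReal (if e i then p else 1 - p))
    (hlameps : ∀ (j : ℕ) (v : Bool),
      lam (epsv j ⁻¹' {v}) = ENNReal.ofReal (if v then p else 1 - p))
    (hindep : ∀ (k m : ℕ) (v : Bool) (s : (Fin k → Bool) × (Fin m → Bool × Bool)),
      lam (epsv k ⁻¹' {v} ∩ EXv k m ⁻¹' {s})
        = lam (epsv k ⁻¹' {v}) * lam (EXv k m ⁻¹' {s})) :
    ∀ (k m : ℕ) (e : Fin k → Bool) (x : Fin m → Bool × Bool),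
      lam (Ev k ⁻¹' {e} ∩ Xv m ⁻¹' {x}) = lam (Ev k ⁻¹' {e}) * lam (Xv m ⁻¹' {x}) := by
  intro k
  induction k with
  | zero =>
    intro m e x
    have h1 : Ev 0 ⁻¹' {e} = Set.univ := by
      ext ω
      simp only [Set.mem_preimage, Set.mem_singleton_iff, Set.mem_univ, iff_true]
      exact funext fun i => i.elim0
    rw [h1, Set.univ_inter, measure_univ, one_mul]
  | succ k ih =>
    intro m e x
    have hE : Ev (k+1) ⁻¹' {e}
        = epsv k ⁻¹' {e (Fin.last k)} ∩ Ev k ⁻¹' {fun i => e i.castSucc} := by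
      ext ω
      simp only [Set.mem_preimage, Set.mem_singleton_iff, Set.mem_inter_iff]
      constructor
      · intro h
        constructor
        · exact congrFun h (Fin.last k)
        · funext i
          exact congrFun h i.castSucc
      · rintro ⟨h1, h2⟩
        funext i
        refine Fin.lastCases ?_ ?_ i
        · exact h1
        · intro i'
          exact congrFun h2 i'
    have hpairset : Ev k ⁻¹' {fun i => e i.castSucc} ∩ Xv m ⁻¹' {x}
        = EXv k m ⁻¹' {((fun i => e i.castSucc), x)} := by
      ext ω
      simp [EXv, Prod.ext_iff]
    have hL : lam (Ev (k+1) ⁻¹' {e} ∩ Xv m ⁻¹' {x})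
        = lam (epsv k ⁻¹' {e (Fin.last k)})
          * (lam (Ev k ⁻¹' {fun i => e i.castSucc}) * lam (Xv m ⁻¹' {x})) := by
      rw [hE, Set.inter_assoc, hpairset,
        hindep k m (e (Fin.last k)) ((fun i => e i.castSucc), x), ← hpairset,
        ih m (fun i => e i.castSucc) x]
    have hsplit : lam (Ev (k+1) ⁻¹' {e})
        = lam (epsv k ⁻¹' {e (Fin.last k)}) * lam (Ev k ⁻¹' {fun i => e i.castSucc}) := by
      rw [hlamEv (k+1) e, hlamEv k (fun i => e i.castSucc), hlameps k (e (Fin.last k))]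
      rw [Fin.prod_univ_castSucc (fun i => ENNReal.ofReal (if e i then p else 1 - p))]
      ring
    rw [hL, hsplit]
    ring

def cylC : Set (Set OmJ) :=
  {S | ∃ (m : ℕ) (x : Fin m → Bool × Bool) (k : ℕ) (e : Fin k → Bool),
    S = (X1 m ⁻¹' {x}) ×ˢ (E1 k ⁻¹' {e})}

lemma X1_inter (m1 m2 : ℕ) (h : m1 ≤ m2) (x1 : Fin m1 → Bool × Bool)
    (x2 : Fin m2 → Bool × Bool) (q0 : Om1) (h1 : X1 m1 q0 = x1) (h2 : X1 m2 q0 = x2) :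
    X1 m1 ⁻¹' {x1} ∩ X1 m2 ⁻¹' {x2} = X1 m2 ⁻¹' {x2} := by
  apply Set.inter_eq_self_of_subset_right
  intro q hq
  rw [Set.mem_preimage, Set.mem_singleton_iff] at hq ⊢
  funext i
  have hi2 : (i : ℕ) < m2 := lt_of_lt_of_le i.isLt h
  calc X1 m1 q i = X1 m2 q ⟨(i : ℕ), hi2⟩ := rfl
  _ = x2 ⟨(i : ℕ), hi2⟩ := by rw [hq]
  _ = X1 m2 q0 ⟨(i : ℕ), hi2⟩ := by rw [h2]
  _ = X1 m1 q0 i := rfl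
  _ = x1 i := by rw [h1]

lemma E1_inter (k1 k2 : ℕ) (h : k1 ≤ k2) (e1 : Fin k1 → Bool)
    (e2 : Fin k2 → Bool) (ε0 : ℕ → Bool) (h1 : E1 k1 ε0 = e1) (h2 : E1 k2 ε0 = e2) :
    E1 k1 ⁻¹' {e1} ∩ E1 k2 ⁻¹' {e2} = E1 k2 ⁻¹' {e2} := by
  apply Set.inter_eq_self_of_subset_right
  intro ε hε
  rw [Set.mem_preimage, Set.mem_singleton_iff] at hε ⊢
  funext i
  have hi2 : (i : ℕ) < k2 := lt_of_lt_of_le i.isLt h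
  calc E1 k1 ε i = E1 k2 ε ⟨(i : ℕ), hi2⟩ := rfl
  _ = e2 ⟨(i : ℕ), hi2⟩ := by rw [hε]
  _ = E1 k2 ε0 ⟨(i : ℕ), hi2⟩ := by rw [h2]
  _ = E1 k1 ε0 i := rfl
  _ = e1 i := by rw [h1]

lemma isPiSystem_cylC : IsPiSystem cylC := by
  rintro S ⟨m1, x1, k1, e1, rfl⟩ T ⟨m2, x2, k2, e2, rfl⟩ hne
  rw [Set.prod_inter_prod] at hne ⊢
  obtain ⟨ω, hω⟩ := hne
  simp only [Set.mem_prod, Set.mem_inter_iff, Set.mem_preimage, Set.mem_singleton_iff] at hω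
  obtain ⟨⟨ha1, ha2⟩, hb1, hb2⟩ := hω
  rcases le_total m1 m2 with hm | hm <;> rcases le_total k1 k2 with hk | hk
  · rw [X1_inter m1 m2 hm x1 x2 ω.1 ha1 ha2, E1_inter k1 k2 hk e1 e2 ω.2 hb1 hb2]
    exact ⟨m2, x2, k2, e2, rfl⟩
  · rw [X1_inter m1 m2 hm x1 x2 ω.1 ha1 ha2, Set.inter_comm,
      E1_inter k2 k1 hk e2 e1 ω.2 hb2 hb1]
    exact ⟨m2, x2, k1, e1, rfl⟩
  · rw [Set.inter_comm (X1 m1 ⁻¹' {x1}), X1_inter m2 m1 hm x2 x1 ω.1 ha2 ha1,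
      E1_inter k1 k2 hk e1 e2 ω.2 hb1 hb2]
    exact ⟨m1, x1, k2, e2, rfl⟩
  · rw [Set.inter_comm (X1 m1 ⁻¹' {x1}), X1_inter m2 m1 hm x2 x1 ω.1 ha2 ha1,
      Set.inter_comm (E1 k1 ⁻¹' {e1}), E1_inter k2 k1 hk e2 e1 ω.2 hb2 hb1]
    exact ⟨m1, x1, k1, e1, rfl⟩

lemma measurable_pi_lambda' {α δ : Type*} {π : δ → Type*} (m : MeasurableSpace α)
    (mπ : ∀ a, MeasurableSpace (π a)) (f : α → ∀ a, π a)
    (hf : ∀ a, @Measurable α (π a) m (mπ a) fun c => f c a) :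
    @Measurable α (∀ a, π a) m (@MeasurableSpace.pi δ π mπ) f := by
  letI := m
  letI := mπ
  exact measurable_pi_lambda f hf

lemma measurable_prod_mk' {α β γ : Type*} (mα : MeasurableSpace α) (mβ : MeasurableSpace β)
    (mγ : MeasurableSpace γ) {f : α → β} {g : α → γ}
    (hf : @Measurable α β mα mβ f) (hg : @Measurable α γ mα mγ g) :
    @Measurable α (β × γ) mα (@Prod.instMeasurableSpace β γ mβ mγ) (fun a => (f a, g a)) := by
  letI := mα
  letI := mβ
  letI := mγ
  exact hf.prodMk hg

lemma generateFrom_cylC :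
    MeasurableSpace.generateFrom cylC = (inferInstance : MeasurableSpace OmJ) := by
  apply le_antisymm
  · apply MeasurableSpace.generateFrom_le
    rintro S ⟨m, x, k, e, rfl⟩
    exact ((measurable_X1 m) (measurableSet_singleton x)).prod
      ((measurable_E1 k) (measurableSet_singleton e))
  · have hIn : ∀ S ∈ cylC, MeasurableSet[MeasurableSpace.generateFrom cylC] S :=
      fun S hS => MeasurableSpace.measurableSet_generateFrom hS
    have hc11 : ∀ (i : ℕ) (b : Bool),
        MeasurableSet[MeasurableSpace.generateFrom cylC] {ω : OmJ | ω.1.1 i = b} := by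
      intro i b
      have hset : {ω : OmJ | ω.1.1 i = b} =
          ⋃ (x : Fin (i+1) → Bool × Bool) (_ : (x ⟨i, Nat.lt_succ_self i⟩).1 = b),
            ((X1 (i+1) ⁻¹' {x}) ×ˢ (E1 0 ⁻¹' {(fun j => (j.elim0 : Bool) : Fin 0 → Bool)})) := by
        ext ω
        simp only [Set.mem_setOf_eq, Set.mem_iUnion, Set.mem_prod, Set.mem_preimage,
          Set.mem_singleton_iff]
        constructor
        · intro h
          exact ⟨X1 (i+1) ω.1, h, rfl, funext fun j => j.elim0⟩
        · rintro ⟨x, hb, hx, -⟩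
          calc ω.1.1 i = (X1 (i+1) ω.1 ⟨i, Nat.lt_succ_self i⟩).1 := rfl
          _ = (x ⟨i, Nat.lt_succ_self i⟩).1 := by rw [hx]
          _ = b := hb
      rw [hset]
      exact MeasurableSet.iUnion fun x => MeasurableSet.iUnion fun _ =>
        hIn _ ⟨i+1, x, 0, _, rfl⟩
    have hc12 : ∀ (i : ℕ) (b : Bool),
        MeasurableSet[MeasurableSpace.generateFrom cylC] {ω : OmJ | ω.1.2 i = b} := by
      intro i b
      have hset : {ω : OmJ | ω.1.2 i = b} =
          ⋃ (x : Fin (i+1) → Bool × Bool) (_ : (x ⟨i, Nat.lt_succ_self i⟩).2 = b),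
            ((X1 (i+1) ⁻¹' {x}) ×ˢ (E1 0 ⁻¹' {(fun j => (j.elim0 : Bool) : Fin 0 → Bool)})) := by
        ext ω
        simp only [Set.mem_setOf_eq, Set.mem_iUnion, Set.mem_prod, Set.mem_preimage,
          Set.mem_singleton_iff]
        constructor
        · intro h
          exact ⟨X1 (i+1) ω.1, h, rfl, funext fun j => j.elim0⟩
        · rintro ⟨x, hb, hx, -⟩
          calc ω.1.2 i = (X1 (i+1) ω.1 ⟨i, Nat.lt_succ_self i⟩).2 := rfl
          _ = (x ⟨i, Nat.lt_succ_self i⟩).2 := by rw [hx]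
          _ = b := hb
      rw [hset]
      exact MeasurableSet.iUnion fun x => MeasurableSet.iUnion fun _ =>
        hIn _ ⟨i+1, x, 0, _, rfl⟩
    have hc2 : ∀ (i : ℕ) (b : Bool),
        MeasurableSet[MeasurableSpace.generateFrom cylC] {ω : OmJ | ω.2 i = b} := by
      intro i b
      have hset : {ω : OmJ | ω.2 i = b} =
          ⋃ (e : Fin (i+1) → Bool) (_ : e ⟨i, Nat.lt_succ_self i⟩ = b),
            ((X1 0 ⁻¹' {(fun j => (j.elim0 : Bool × Bool) : Fin 0 → Bool × Bool)})
              ×ˢ (E1 (i+1) ⁻¹' {e})) := by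
        ext ω
        simp only [Set.mem_setOf_eq, Set.mem_iUnion, Set.mem_prod, Set.mem_preimage,
          Set.mem_singleton_iff]
        constructor
        · intro h
          exact ⟨E1 (i+1) ω.2, h, funext fun j => j.elim0, rfl⟩
        · rintro ⟨e, hb, -, he⟩
          calc ω.2 i = E1 (i+1) ω.2 ⟨i, Nat.lt_succ_self i⟩ := rfl
          _ = e ⟨i, Nat.lt_succ_self i⟩ := by rw [he]
          _ = b := hb
      rw [hset]
      exact MeasurableSet.iUnion fun e => MeasurableSet.iUnion fun _ =>
        hIn _ ⟨0, _, i+1, e, rfl⟩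
    have hbool : ∀ (f : OmJ → Bool), (∀ b, MeasurableSet[MeasurableSpace.generateFrom cylC] (f ⁻¹' {b})) →
        @Measurable OmJ Bool (MeasurableSpace.generateFrom cylC) _ f := by
      intro f hf s _
      have hs : f ⁻¹' s = ⋃ b ∈ s, f ⁻¹' {b} := by
        ext ω; simp
      rw [hs]
      exact MeasurableSet.biUnion (Set.to_countable s) fun b _ => hf b
    have hm11 : ∀ i, @Measurable OmJ Bool (MeasurableSpace.generateFrom cylC) _
        (fun ω : OmJ => ω.1.1 i) := fun i => hbool _ (fun b => hc11 i b)
    have hm12 : ∀ i, @Measurable OmJ Bool (MeasurableSpace.generateFrom cylC) _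
        (fun ω : OmJ => ω.1.2 i) := fun i => hbool _ (fun b => hc12 i b)
    have hm2 : ∀ i, @Measurable OmJ Bool (MeasurableSpace.generateFrom cylC) _
        (fun ω : OmJ => ω.2 i) := fun i => hbool _ (fun b => hc2 i b)
    have h1 : @Measurable OmJ (ℕ → Bool) (MeasurableSpace.generateFrom cylC) _
        (fun ω : OmJ => ω.1.1) :=
      measurable_pi_lambda' (MeasurableSpace.generateFrom cylC) (fun _ => inferInstance) _ hm11
    have h2 : @Measurable OmJ (ℕ → Bool) (MeasurableSpace.generateFrom cylC) _
        (fun ω : OmJ => ω.1.2) :=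
      measurable_pi_lambda' (MeasurableSpace.generateFrom cylC) (fun _ => inferInstance) _ hm12
    have h3 : @Measurable OmJ (ℕ → Bool) (MeasurableSpace.generateFrom cylC) _
        (fun ω : OmJ => ω.2) :=
      measurable_pi_lambda' (MeasurableSpace.generateFrom cylC) (fun _ => inferInstance) _ hm2
    have hfst : @Measurable OmJ Om1 (MeasurableSpace.generateFrom cylC) _
        (fun ω : OmJ => ω.1) :=
      measurable_prod_mk' (MeasurableSpace.generateFrom cylC) _ _ h1 h2
    have hid : @Measurable OmJ OmJ (MeasurableSpace.generateFrom cylC) _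
        (fun ω : OmJ => ω) :=
      measurable_prod_mk' (MeasurableSpace.generateFrom cylC) _ _ hfst h3
    intro s hs
    simpa using hid hs

end FurstAux

open FurstAux in
/-- Furstenberg's disjointness theorem (special case): every shift-invariant
joining of a zero-entropy system with an i.i.d. Bernoulli system is the
product joining. -/
theorem furstenberg_disjointness
    (p : ℝ) (hp0 : 0 < p) (hp1 : p < 1)
    (lam₃ : Measure ((ℕ → Bool) × (ℕ → Bool))) [IsProbabilityMeasure lam₃]
    (hlam₃inv : lam₃.map pairShift = lam₃)
    (hzero : HasZeroEntropyPair lam₃)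
    (η : Measure (ℕ → Bool)) [IsProbabilityMeasure η]
    (hiid : iIndepFun
        (fun (i : ℕ) (ε : ℕ → Bool) => ε i) η)
    (hmarg : ∀ i : ℕ, η.map (fun ε : ℕ → Bool => ε i) = bernoulliBool p)
    (lam : Measure (((ℕ → Bool) × (ℕ → Bool)) × (ℕ → Bool)))
    [IsProbabilityMeasure lam]
    (hlaminv : lam.map (Prod.map pairShift binShift) = lam)
    (hfst : lam.map Prod.fst = lam₃) (hsnd : lam.map Prod.snd = η) :
    lam = lam₃.prod η := by
  classical
  have hshift : lam.map shiftJ = lam := hlaminv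
  have hlamEv := lam_Ev p lam η hiid hmarg hsnd
  have hlameps := lam_eps p lam η hmarg hsnd
  have hentEv := ent_Ev p hp0.le hp1.le lam hlamEv
  have henteps := ent_eps p hp0.le hp1.le lam hlameps
  have hentX := ent_Xv_eq_block lam lam₃ hfst
  have hzero' : Tendsto (fun n : ℕ => ent lam (Xv n) / n) atTop (𝓝 0) := by
    have he : (fun n : ℕ => ent lam (Xv n) / n)
        = fun n : ℕ => blockEntropyPair lam₃ n / n := by
      funext n
      rw [hentX n]
      rfl
    rw [he]
    exact hzero
  have hd_eq : ∀ k m : ℕ, ent lam (Gv k m) - ent lam (EXv k m)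
      = Real.negMulLog p + Real.negMulLog (1 - p) := by
    intro k m
    have hle := delta_le_Hp p lam henteps k m
    rcases le_or_gt (Real.negMulLog p + Real.negMulLog (1 - p))
      (ent lam (Gv k m) - ent lam (EXv k m)) with hge | hlt
    · linarith
    · exfalso
      have hδpos : 0 < (Real.negMulLog p + Real.negMulLog (1 - p))
          - (ent lam (Gv k m) - ent lam (EXv k m)) := by linarith
      have h0 : (Real.negMulLog p + Real.negMulLog (1 - p))
          - (ent lam (Gv k m) - ent lam (EXv k m)) ≤ 0 := by
        apply tendsto_aux _ hzero' (k + m)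
        intro n hn
        have h1 := key_ineq p lam hshift hentEv henteps k m n
        have h2 := card_valid k m n
        have h3 := mul_le_mul_of_nonneg_right h2 (le_of_lt hδpos)
        calc ((n : ℝ) - ((k + m : ℕ) : ℝ))
              * ((Real.negMulLog p + Real.negMulLog (1 - p))
                - (ent lam (Gv k m) - ent lam (EXv k m)))
            = ((n : ℝ) - ((k : ℝ) + (m : ℝ)))
              * ((Real.negMulLog p + Real.negMulLog (1 - p))
                - (ent lam (Gv k m) - ent lam (EXv k m))) := by push_cast; ring
        _ ≤ _ := h3
        _ ≤ ent lam (Xv n) := h1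
      linarith
  have hindep : ∀ (k m : ℕ) (v : Bool) (s : (Fin k → Bool) × (Fin m → Bool × Bool)),
      lam (epsv k ⁻¹' {v} ∩ EXv k m ⁻¹' {s})
        = lam (epsv k ⁻¹' {v}) * lam (EXv k m ⁻¹' {s}) := by
    intro k m v s
    apply indep_of_ent p lam k m ?_ v s
    have h1 := hd_eq k m
    have h2 := henteps k
    linarith
  have hPF := prodF p lam hlamEv hlameps hindep
  apply MeasureTheory.ext_of_generate_finite cylC generateFrom_cylC.symm isPiSystem_cylC
  · rintro S ⟨m, x, k, e, rfl⟩
    have hrect : ((X1 m ⁻¹' {x}) ×ˢ (E1 k ⁻¹' {e}) : Set OmJ)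
        = Ev k ⁻¹' {e} ∩ Xv m ⁻¹' {x} := by
      ext ω
      simp only [Set.mem_prod, Set.mem_preimage, Set.mem_singleton_iff, Set.mem_inter_iff]
      exact and_comm
    have hEv : lam (Ev k ⁻¹' {e}) = η (E1 k ⁻¹' {e}) := by
      rw [← hsnd, Measure.map_apply measurable_snd
        ((measurable_E1 k) (measurableSet_singleton e))]
      rfl
    have hXv : lam (Xv m ⁻¹' {x}) = lam₃ (X1 m ⁻¹' {x}) := by
      rw [← hfst, Measure.map_apply measurable_fst
        ((measurable_X1 m) (measurableSet_singleton x))]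
      rfl
    calc lam ((X1 m ⁻¹' {x}) ×ˢ (E1 k ⁻¹' {e}))
        = lam (Ev k ⁻¹' {e} ∩ Xv m ⁻¹' {x}) := by rw [hrect]
    _ = lam (Ev k ⁻¹' {e}) * lam (Xv m ⁻¹' {x}) := hPF k m e x
    _ = η (E1 k ⁻¹' {e}) * lam₃ (X1 m ⁻¹' {x}) := by rw [hEv, hXv]
    _ = lam₃ (X1 m ⁻¹' {x}) * η (E1 k ⁻¹' {e}) := mul_comm _ _
    _ = (lam₃.prod η) ((X1 m ⁻¹' {x}) ×ˢ (E1 k ⁻¹' {e})) := (Measure.prod_prod _ _).symm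
  · rw [show (Set.univ : Set OmJ) = Set.univ ×ˢ Set.univ from (Set.univ_prod_univ).symm,
      Measure.prod_prod]
    simp [measure_univ]
end

section
/- Let R_α(x) = x + α mod 1 on [0,1), Θ = [0,1/2], and π : [0,1) → {0,1} with π(u) = 0 if u ∈ [0,1/2) and π(u) = 1 if u ∈ [1/2,1). Then for any α₁ < α₂ in Θ and any 0 < ε < (α₂ − α₁)/2, setting O = [α₂ − ε, α₂ + ε] ∩ Θ and N ≥ 3/(2(α₂ − α₁ − ε)): for all u, v ∈ [0,1) and all α ∈ O, there exists k ∈ [0, N] with π(R_α^k u) ≠ π(R_{α₁}^k v). -/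
open Set

/-- Rotation by `α` on the circle `[0,1)` (addition mod 1). -/
noncomputable def rot (α : ℝ) (x : ℝ) : ℝ := Int.fract (x + α)

/-- The binary label of a point of `[0,1)` for the partition
`{[0,1/2), [1/2,1)}`. -/
noncomputable def lab (x : ℝ) : Bool := decide ((1 : ℝ) / 2 ≤ x)

lemma rot_iter (α u : ℝ) (hu : u ∈ Ico (0:ℝ) 1) (k : ℕ) :
    (rot α)^[k] u = Int.fract (u + k * α) := by
  induction k with
  | zero => simp [Int.fract_eq_self.2 ⟨hu.1, hu.2⟩]
  | succ n ih =>
      rw [Function.iterate_succ_apply', ih, rot]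
      have h : Int.fract (u + n*α) + α = (u + n*α + α) - (⌊u + (n:ℝ)*α⌋ : ℤ) := by
        rw [Int.fract]; push_cast; ring
      rw [h, Int.fract_sub_intCast]
      congr 1
      push_cast; ring

lemma half_le_fract_iff (x : ℝ) : (1/2 : ℝ) ≤ Int.fract x ↔ Odd ⌊2*x⌋ := by
  have h : (2:ℝ)*x = 2*Int.fract x + ((2*⌊x⌋ : ℤ) : ℝ) := by
    rw [Int.fract]; push_cast; ring
  rw [h, Int.floor_add_intCast]
  constructor
  · intro hx
    have h1 : ⌊(2:ℝ) * Int.fract x⌋ = 1 := by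
      rw [Int.floor_eq_iff]
      constructor
      · push_cast; linarith
      · push_cast; linarith [Int.fract_lt_one x]
    rw [h1]; exact ⟨⌊x⌋, by ring⟩
  · intro hx
    by_contra hc
    push_neg at hc
    have h0 : ⌊(2:ℝ) * Int.fract x⌋ = 0 := by
      rw [Int.floor_eq_iff]
      constructor
      · push_cast; linarith [Int.fract_nonneg x]
      · push_cast; linarith
    rw [h0] at hx
    have : Even ((0:ℤ) + 2*⌊x⌋) := ⟨⌊x⌋, by ring⟩
    exact (Int.not_odd_iff_even.2 this) hx

/-- Label sequences distinguish distinct rotation angles, uniformly over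
initial points: if `α₁ < α₂` in `[0,1/2]`, `0 < ε < (α₂ − α₁)/2`,
`O = [α₂ − ε, α₂ + ε] ∩ [0,1/2]` and `N ≥ 3/(2(α₂ − α₁ − ε))`, then for all
`u, v ∈ [0,1)` and all `α ∈ O` some `k ≤ N` gives differing labels. -/
theorem rotations_distinguished
    (α₁ α₂ : ℝ) (hα₁ : α₁ ∈ Icc (0 : ℝ) (1 / 2))
    (hα₂ : α₂ ∈ Icc (0 : ℝ) (1 / 2)) (hlt : α₁ < α₂)
    (ε : ℝ) (hε0 : 0 < ε) (hε : ε < (α₂ - α₁) / 2)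
    (N : ℕ) (hN : (N : ℝ) ≥ 3 / (2 * (α₂ - α₁ - ε))) :
    ∀ u ∈ Ico (0 : ℝ) 1, ∀ v ∈ Ico (0 : ℝ) 1,
      ∀ α ∈ Icc (α₂ - ε) (α₂ + ε) ∩ Icc (0 : ℝ) (1 / 2),
        ∃ k : ℕ, k ≤ N ∧ lab ((rot α)^[k] u) ≠ lab ((rot α₁)^[k] v) := by
  intro u hu v hv α hα
  obtain ⟨hαI, hαT⟩ := hα
  by_contra hcon
  push_neg at hcon
  -- basic bounds
  have hd : 0 < α₂ - α₁ - ε := by linarith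
  have hδ : α₂ - α₁ - ε ≤ α - α₁ := by
    have := hαI.1; linarith
  have hα0 : 0 ≤ α := hαT.1
  have hα12 : α ≤ 1/2 := hαT.2
  have hNd : 3 ≤ 2 * (N:ℝ) * (α₂ - α₁ - ε) := by
    rw [ge_iff_le, div_le_iff₀ (by linarith)] at hN
    linarith
  have hNδ : 3 ≤ 2 * (N:ℝ) * (α - α₁) := by
    have hN0 : (0:ℝ) ≤ (N:ℝ) := Nat.cast_nonneg N
    nlinarith
  -- parity consequence of equal labels
  have hpar : ∀ k : ℕ, k ≤ N → (Odd ⌊2*(u + k*α)⌋ ↔ Odd ⌊2*(v + k*α₁)⌋) := by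
    intro k hk
    have h := hcon k hk
    rw [rot_iter α u hu k, rot_iter α₁ v hv k, lab, lab, decide_eq_decide] at h
    rw [← half_le_fract_iff, ← half_le_fract_iff]
    exact h
  have heven : ∀ k : ℕ, k ≤ N → Even (⌊2*(u + k*α)⌋ - ⌊2*(v + k*α₁)⌋) := by
    intro k hk
    rw [Int.even_sub]
    simp only [← Int.not_odd_iff_even]
    exact not_congr (hpar k hk)
  -- the difference of floors is constant
  have hconst : ∀ k : ℕ, k ≤ N →
      ⌊2*(u + k*α)⌋ - ⌊2*(v + k*α₁)⌋ = ⌊2*(u + 0*α)⌋ - ⌊2*(v + 0*α₁)⌋ := by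
    intro k
    induction k with
    | zero => intro _; norm_num
    | succ n ih =>
        intro hn1
        have hn : n ≤ N := Nat.le_of_succ_le hn1
        have hstepP1 : ⌊2*(u + n*α)⌋ ≤ ⌊2*(u + (n+1:ℕ)*α)⌋ := by
          apply Int.floor_le_floor
          push_cast; nlinarith
        have hstepP2 : ⌊2*(u + (n+1:ℕ)*α)⌋ ≤ ⌊2*(u + n*α)⌋ + 1 := by
          have : ⌊2*(u + (n+1:ℕ)*α)⌋ ≤ ⌊2*(u + n*α) + 1⌋ := by
            apply Int.floor_le_floor
            push_cast; nlinarith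
          simpa [Int.floor_add_one] using this
        have hα₁0 : 0 ≤ α₁ := hα₁.1
        have hα₁2 : α₁ ≤ 1/2 := hα₁.2
        have hstepQ1 : ⌊2*(v + n*α₁)⌋ ≤ ⌊2*(v + (n+1:ℕ)*α₁)⌋ := by
          apply Int.floor_le_floor
          push_cast; nlinarith
        have hstepQ2 : ⌊2*(v + (n+1:ℕ)*α₁)⌋ ≤ ⌊2*(v + n*α₁)⌋ + 1 := by
          have : ⌊2*(v + (n+1:ℕ)*α₁)⌋ ≤ ⌊2*(v + n*α₁) + 1⌋ := by
            apply Int.floor_le_floor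
            push_cast; nlinarith
          simpa [Int.floor_add_one] using this
        have he1 := heven n hn
        have he2 := heven (n+1) hn1
        obtain ⟨a, ha⟩ := he1
        obtain ⟨b, hb⟩ := he2
        have hihn := ih hn
        omega
  -- contradiction at k = N
  have hfinal := hconst N le_rfl
  -- lower bound for ⌊2(u+Nα)⌋
  have hlow : ⌊2*(v + N*α₁)⌋ + ⌊2*(u-v) + 2*N*(α-α₁)⌋ ≤ ⌊2*(u + N*α)⌋ := by
    rw [Int.le_floor]
    push_cast
    have h1 := Int.floor_le (2*(v + N*α₁))
    have h2 := Int.floor_le (2*(u-v) + 2*(N:ℝ)*(α-α₁))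
    linarith
  have hlow2 : ⌊2*(u-v)⌋ + 3 ≤ ⌊2*(u-v) + 2*(N:ℝ)*(α-α₁)⌋ := by
    rw [Int.le_floor]
    push_cast
    have h1 := Int.floor_le (2*(u-v))
    linarith
  -- upper bound for ⌊2u⌋
  have hup : ⌊2*(u + 0*α)⌋ < ⌊2*(u-v)⌋ + ⌊2*(v + 0*α₁)⌋ + 2 := by
    rw [Int.floor_lt]
    push_cast
    have h1 := Int.lt_floor_add_one (2*(u-v))
    have h2 := Int.lt_floor_add_one (2*(v + 0*α₁))
    linarith
  omega
end
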